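/- arXiv:0812.2156 — 6 statements merged into one kernel-verified Lean document; each statement's English description precedes it below -/
import Mathlib

section
/- Let L be a complex Leibniz superalgebra with dim L₀ = n and dim L₁ = m whose nilindex equals n+m+1. Then L is isomorphic to one of the following two superalgebras (all products of basis elements not listed are zero): (i) m = 0 and L has a basis e₁,…,e_n of L₀ with [e_i,e₁]=e_{i+1} for 1 ≤ i ≤ n−1; (ii) L has a basis e₁,…,e_{n+m} with e_i ∈ L₁ for i odd and e_i ∈ L₀ for i even, satisfying [e_i,e₁]=e_{i+1} for 1 ≤ i ≤ n+m−1 and [e_i,e₂]=2e_{i+2} for 1 ≤ i ≤ n+m−2; moreover, in case (ii) one has m = n when n+m is even and m = n+1 when n+m is odd. -/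
/-- A complex Leibniz superalgebra: a ℤ₂-graded complex vector space `L = L₀ ⊕ L₁`
with a bilinear bracket satisfying `[L_α, L_β] ⊆ L_{α+β}` and the Leibniz
superidentity `[x,[y,z]] = [[x,y],z] − (−1)^{αβ}[[x,z],y]` for homogeneous `y, z`. -/
structure LeibnizSuper (L : Type*) [AddCommGroup L] [Module ℂ L] where
  bracket : L →ₗ[ℂ] L →ₗ[ℂ] L
  L0 : Submodule ℂ L
  L1 : Submodule ℂ L
  compl : IsCompl L0 L1
  g00 : ∀ y ∈ L0, ∀ z ∈ L0, bracket y z ∈ L0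
  g01 : ∀ y ∈ L0, ∀ z ∈ L1, bracket y z ∈ L1
  g10 : ∀ y ∈ L1, ∀ z ∈ L0, bracket y z ∈ L1
  g11 : ∀ y ∈ L1, ∀ z ∈ L1, bracket y z ∈ L0
  leib00 : ∀ x : L, ∀ y ∈ L0, ∀ z ∈ L0,
    bracket x (bracket y z) = bracket (bracket x y) z - bracket (bracket x z) y
  leib01 : ∀ x : L, ∀ y ∈ L0, ∀ z ∈ L1,
    bracket x (bracket y z) = bracket (bracket x y) z - bracket (bracket x z) y
  leib10 : ∀ x : L, ∀ y ∈ L1, ∀ z ∈ L0,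
    bracket x (bracket y z) = bracket (bracket x y) z - bracket (bracket x z) y
  leib11 : ∀ x : L, ∀ y ∈ L1, ∀ z ∈ L1,
    bracket x (bracket y z) = bracket (bracket x y) z + bracket (bracket x z) y

/-- `HasJordanType f ls` : the nilpotent endomorphism `f` has Jordan blocks of sizes
given by the decreasing list `ls` (the number of blocks of size `≥ j+1` equals
`rank f^j − rank f^{j+1}`). -/
def HasJordanType {V : Type*} [AddCommGroup V] [Module ℂ V] (f : Module.End ℂ V)
    (ls : List ℕ) : Prop :=
  ls.Pairwise (· ≥ ·) ∧ (∀ a ∈ ls, 0 < a) ∧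
  ∀ j : ℕ, ls.countP (fun a => decide (j + 1 ≤ a)) =
    Module.finrank ℂ (LinearMap.range (f ^ j)) -
      Module.finrank ℂ (LinearMap.range (f ^ (j + 1)))

namespace LeibnizSuper

variable {L : Type*} [AddCommGroup L] [Module ℂ L] (S : LeibnizSuper L)

/-- The span of all brackets `[a,b]`, `a ∈ p`, `b ∈ q`. -/
def bracketSpan (p q : Submodule ℂ L) : Submodule ℂ L :=
  Submodule.span ℂ {z | ∃ a ∈ p, ∃ b ∈ q, z = S.bracket a b}

/-- Descending central series; `S.term k` is `L^{k+1}` (so `S.term 0 = L¹ = L`). -/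
def term : ℕ → Submodule ℂ L
  | 0 => ⊤
  | k + 1 => S.bracketSpan (term k) ⊤

/-- `S.HasNilindex s` : `s` is the minimal natural number with `L^s = 0`. -/
def HasNilindex (s : ℕ) : Prop :=
  0 < s ∧ S.term (s - 1) = ⊥ ∧ ∀ t : ℕ, t + 1 < s → S.term t ≠ ⊥

/-- The superalgebra is nilpotent. -/
def IsNilpotentSuper : Prop := ∃ s, S.term s = ⊥

/-- Right multiplication operator `R_x z = [z, x]`. -/
def R (x : L) : Module.End ℂ L := S.bracket.flip x

/-- Restriction of `R_x` (for `x ∈ L₀`) to the even part `L₀`. -/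
def R0 (x : L) (hx : x ∈ S.L0) : Module.End ℂ S.L0 :=
  (S.R x).restrict (fun z hz => S.g00 z hz x hx)

/-- Restriction of `R_x` (for `x ∈ L₀`) to the odd part `L₁`. -/
def R1 (x : L) (hx : x ∈ S.L0) : Module.End ℂ S.L1 :=
  (S.R x).restrict (fun z hz => S.g10 z hz x hx)

/-- `S.HasCharSeq ns ms` : the characteristic sequence of `S` is `(ns | ms)`, i.e.
`ns` (resp. `ms`) is the lexicographically maximal sequence of Jordan block sizes of
`R_x` restricted to `L₀` (resp. `L₁`) over all `x ∈ L₀ ∖ [L₀, L₀]`. -/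
def HasCharSeq (ns ms : List ℕ) : Prop :=
  (∃ x, ∃ hx : x ∈ S.L0, x ∉ S.bracketSpan S.L0 S.L0 ∧ HasJordanType (S.R0 x hx) ns) ∧
  (∀ x, ∀ hx : x ∈ S.L0, x ∉ S.bracketSpan S.L0 S.L0 →
    ∀ ls, HasJordanType (S.R0 x hx) ls → ls = ns ∨ List.Lex (· < ·) ls ns) ∧
  (∃ x, ∃ hx : x ∈ S.L0, x ∉ S.bracketSpan S.L0 S.L0 ∧ HasJordanType (S.R1 x hx) ms) ∧
  (∀ x, ∀ hx : x ∈ S.L0, x ∉ S.bracketSpan S.L0 S.L0 →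
    ∀ ls, HasJordanType (S.R1 x hx) ls → ls = ms ∨ List.Lex (· < ·) ls ms)

/-- `S ∈ ZF^{n,m}` : `S` is zero-filiform with `dim L₀ = n`, `dim L₁ = m`. -/
def ZeroFiliform (n m : ℕ) : Prop :=
  Module.finrank ℂ S.L0 = n ∧ Module.finrank ℂ S.L1 = m ∧ S.HasCharSeq [n] [m]

/-- A graded subalgebra: a submodule closed under the bracket which is the sum of
its intersections with the even and the odd parts. -/
def IsGradedSubalgebra (p : Submodule ℂ L) : Prop :=
  (∀ a ∈ p, ∀ b ∈ p, S.bracket a b ∈ p) ∧ p = p ⊓ S.L0 ⊔ p ⊓ S.L1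

/-- `A` generates the superalgebra: the smallest graded subalgebra containing `A` is `L`. -/
def Generates (A : Set L) : Prop :=
  ∀ p : Submodule ℂ L, S.IsGradedSubalgebra p → A ⊆ p → p = ⊤

/-- An adapted basis `{x₁,…,x_n, y₁,…,y_m}` of a zero-filiform Leibniz superalgebra
(1-based indexing). -/
def IsAdaptedPair (n m : ℕ) (x y : ℕ → L) : Prop :=
  (∀ i, 1 ≤ i → i ≤ n → x i ∈ S.L0) ∧
  (∀ j, 1 ≤ j → j ≤ m → y j ∈ S.L1) ∧
  LinearIndependent ℂ
    (Sum.elim (fun i : Fin n => x ((i : ℕ) + 1)) (fun j : Fin m => y ((j : ℕ) + 1))) ∧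
  Submodule.span ℂ (Set.range
    (Sum.elim (fun i : Fin n => x ((i : ℕ) + 1)) (fun j : Fin m => y ((j : ℕ) + 1)))) = ⊤ ∧
  (∀ i, 1 ≤ i → i ≤ n - 1 → S.bracket (x i) (x 1) = x (i + 1)) ∧
  S.bracket (x n) (x 1) = 0 ∧
  (∀ i k, 1 ≤ i → i ≤ n → 2 ≤ k → k ≤ n → S.bracket (x i) (x k) = 0) ∧
  (∀ j, 1 ≤ j → j ≤ m - 1 → S.bracket (y j) (x 1) = y (j + 1)) ∧
  S.bracket (y m) (x 1) = 0 ∧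
  (∀ j k, 1 ≤ j → j ≤ m → 2 ≤ k → k ≤ n → S.bracket (y j) (x k) = 0)

end LeibnizSuper

namespace LeibnizSuper

section Aux

variable {L : Type*} [AddCommGroup L] [Module ℂ L] (S : LeibnizSuper L)

lemma bracket_mem {p q : Submodule ℂ L} {a b : L} (ha : a ∈ p) (hb : b ∈ q) :
    S.bracket a b ∈ S.bracketSpan p q :=
  Submodule.subset_span ⟨a, ha, b, hb, rfl⟩

lemma bracketSpan_le' {p q r : Submodule ℂ L} (h : ∀ a ∈ p, ∀ b ∈ q, S.bracket a b ∈ r) :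
    S.bracketSpan p q ≤ r :=
  Submodule.span_le.mpr (by rintro z ⟨a, ha, b, hb, rfl⟩; exact h a ha b hb)

lemma bracketSpan_mono' {p p' q q' : Submodule ℂ L} (hp : p ≤ p') (hq : q ≤ q') :
    S.bracketSpan p q ≤ S.bracketSpan p' q' :=
  S.bracketSpan_le' fun a ha b hb => S.bracket_mem (hp ha) (hq hb)

lemma mem_decomp (x : L) : ∃ x0 ∈ S.L0, ∃ x1 ∈ S.L1, x = x0 + x1 := by
  have hx : x ∈ S.L0 ⊔ S.L1 := by rw [S.compl.codisjoint.eq_top]; trivial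
  obtain ⟨x0, h0, x1, h1, hsum⟩ := Submodule.mem_sup.mp hx
  exact ⟨x0, h0, x1, h1, hsum.symm⟩

lemma term_zero : S.term 0 = ⊤ := rfl

lemma term_succ (k : ℕ) : S.term (k + 1) = S.bracketSpan (S.term k) ⊤ := rfl

lemma term_succ_le : ∀ k, S.term (k + 1) ≤ S.term k := by
  intro k; induction k with
  | zero => exact le_top
  | succ k ih => exact S.bracketSpan_mono' ih le_rfl

lemma term_le_of_le {k l : ℕ} (h : k ≤ l) : S.term l ≤ S.term k := by
  induction l with
  | zero => obtain rfl : k = 0 := Nat.le_zero.mp h; exact le_rfl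
  | succ l ih =>
    rcases Nat.eq_or_lt_of_le h with rfl | h'
    · exact le_rfl
    · exact (S.term_succ_le l).trans (ih (Nat.lt_succ_iff.mp h'))

lemma term_graded : ∀ k, S.term k ≤ (S.term k ⊓ S.L0) ⊔ (S.term k ⊓ S.L1) := by
  intro k; induction k with
  | zero =>
    intro x _
    obtain ⟨x0, h0, x1, h1, rfl⟩ := S.mem_decomp x
    exact add_mem
      (Submodule.mem_sup_left (Submodule.mem_inf.mpr ⟨Submodule.mem_top, h0⟩))
      (Submodule.mem_sup_right (Submodule.mem_inf.mpr ⟨Submodule.mem_top, h1⟩))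
  | succ k ih =>
    rw [term_succ]
    apply S.bracketSpan_le'
    intro a ha b _
    obtain ⟨a0, ha0, a1, ha1, hsum⟩ := Submodule.mem_sup.mp (ih ha)
    obtain ⟨b0, hb0, b1, hb1, hbsum⟩ := S.mem_decomp b
    obtain ⟨ha0t, ha0g⟩ := Submodule.mem_inf.mp ha0
    obtain ⟨ha1t, ha1g⟩ := Submodule.mem_inf.mp ha1
    have m00 : S.bracket a0 b0 ∈ S.bracketSpan (S.term k) ⊤ ⊓ S.L0 :=
      Submodule.mem_inf.mpr ⟨S.bracket_mem ha0t Submodule.mem_top, S.g00 a0 ha0g b0 hb0⟩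
    have m01 : S.bracket a0 b1 ∈ S.bracketSpan (S.term k) ⊤ ⊓ S.L1 :=
      Submodule.mem_inf.mpr ⟨S.bracket_mem ha0t Submodule.mem_top, S.g01 a0 ha0g b1 hb1⟩
    have m10 : S.bracket a1 b0 ∈ S.bracketSpan (S.term k) ⊤ ⊓ S.L1 :=
      Submodule.mem_inf.mpr ⟨S.bracket_mem ha1t Submodule.mem_top, S.g10 a1 ha1g b0 hb0⟩
    have m11 : S.bracket a1 b1 ∈ S.bracketSpan (S.term k) ⊤ ⊓ S.L0 :=
      Submodule.mem_inf.mpr ⟨S.bracket_mem ha1t Submodule.mem_top, S.g11 a1 ha1g b1 hb1⟩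
    rw [← hsum, hbsum]
    simp only [map_add, LinearMap.add_apply]
    exact add_mem (add_mem (Submodule.mem_sup_left m00) (Submodule.mem_sup_right m10))
      (add_mem (Submodule.mem_sup_right m01) (Submodule.mem_sup_left m11))

lemma bracketSpan_gen_le {p r q1 q2 : Submodule ℂ L}
    (h : ∀ a ∈ p, ∀ u ∈ q1, ∀ v ∈ q2, S.bracket a (S.bracket u v) ∈ r) :
    S.bracketSpan p (S.bracketSpan q1 q2) ≤ r := by
  apply S.bracketSpan_le'
  intro a ha b hb
  have hle : S.bracketSpan q1 q2 ≤ r.comap (S.bracket a) :=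
    Submodule.span_le.mpr (by rintro z ⟨u, hu, v, hv, rfl⟩; exact h a ha u hu v hv)
  exact hle hb

lemma bs_term : ∀ b a, S.bracketSpan (S.term a) (S.term b) ≤ S.term (a + b + 1) := by
  intro b
  induction b with
  | zero => intro a; rw [term_succ]; exact S.bracketSpan_mono' le_rfl le_top
  | succ b ih =>
    intro a
    rw [S.term_succ b]
    apply S.bracketSpan_gen_le
    intro x hx u hu v _
    have hT1 : ∀ w z, w ∈ S.term b → S.bracket (S.bracket x w) z ∈ S.term (a + (b + 1) + 1) := by
      intro w z hw
      have h1 : S.bracket x w ∈ S.term (a + b + 1) := ih a (S.bracket_mem hx hw)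
      have h2 : S.bracket (S.bracket x w) z ∈ S.term (a + b + 1 + 1) := by
        rw [term_succ]; exact S.bracket_mem h1 Submodule.mem_top
      exact (show a + b + 1 + 1 = a + (b + 1) + 1 by omega) ▸ h2
    have hT2 : ∀ w z, w ∈ S.term b → S.bracket (S.bracket x z) w ∈ S.term (a + (b + 1) + 1) := by
      intro w z hw
      have h1 : S.bracket x z ∈ S.term (a + 1) := by
        rw [term_succ]; exact S.bracket_mem hx Submodule.mem_top
      have h2 := ih (a + 1) (S.bracket_mem h1 hw)
      exact (show a + 1 + b + 1 = a + (b + 1) + 1 by omega) ▸ h2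
    obtain ⟨u0, hu0, u1, hu1, husum⟩ := Submodule.mem_sup.mp (S.term_graded b hu)
    obtain ⟨v0, hv0, v1, hv1, hvsum⟩ := S.mem_decomp v
    obtain ⟨hu0t, hu0g⟩ := Submodule.mem_inf.mp hu0
    obtain ⟨hu1t, hu1g⟩ := Submodule.mem_inf.mp hu1
    have m00 : S.bracket x (S.bracket u0 v0) ∈ S.term (a + (b + 1) + 1) := by
      rw [S.leib00 x u0 hu0g v0 hv0]
      exact sub_mem (hT1 u0 v0 hu0t) (hT2 u0 v0 hu0t)
    have m01 : S.bracket x (S.bracket u0 v1) ∈ S.term (a + (b + 1) + 1) := by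
      rw [S.leib01 x u0 hu0g v1 hv1]
      exact sub_mem (hT1 u0 v1 hu0t) (hT2 u0 v1 hu0t)
    have m10 : S.bracket x (S.bracket u1 v0) ∈ S.term (a + (b + 1) + 1) := by
      rw [S.leib10 x u1 hu1g v0 hv0]
      exact sub_mem (hT1 u1 v0 hu1t) (hT2 u1 v0 hu1t)
    have m11 : S.bracket x (S.bracket u1 v1) ∈ S.term (a + (b + 1) + 1) := by
      rw [S.leib11 x u1 hu1g v1 hv1]
      exact add_mem (hT1 u1 v1 hu1t) (hT2 u1 v1 hu1t)
    rw [← husum, hvsum]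
    simp only [map_add, LinearMap.add_apply]
    exact add_mem (add_mem m00 m10) (add_mem m01 m11)

end Aux

end LeibnizSuper

open LeibnizSuper in
/-- Classification of complex Leibniz superalgebras of maximal nilindex `n+m+1`
(Theorem 2.1): either `m = 0` and `L` has a basis `e₁,…,e_n` of `L₀` with
`[e_i,e₁] = e_{i+1}` (all other products zero), or `L` has a basis `e₁,…,e_{n+m}`
with `e_i ∈ L₁` for `i` odd, `e_i ∈ L₀` for `i` even, `[e_i,e₁] = e_{i+1}`,
`[e_i,e₂] = 2e_{i+2}` (all other products zero); in the second case `m = n` if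
`n + m` is even and `m = n + 1` if `n + m` is odd.  (Basis indices are 0-based:
`e i` corresponds to the paper's `e_{i+1}`.) -/
theorem nilindex_max_classification {L : Type*} [AddCommGroup L] [Module ℂ L]
    [FiniteDimensional ℂ L] (S : LeibnizSuper L) (n m : ℕ)
    (hn : Module.finrank ℂ S.L0 = n) (hm : Module.finrank ℂ S.L1 = m)
    (hnil : S.HasNilindex (n + m + 1)) :
    (m = 0 ∧ ∃ e : Module.Basis (Fin n) ℂ L, (∀ i, e i ∈ S.L0) ∧
      ∀ i j : Fin n, S.bracket (e i) (e j) =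
        if h : (j : ℕ) = 0 ∧ (i : ℕ) + 1 < n then e ⟨(i : ℕ) + 1, h.2⟩ else 0) ∨
    (∃ e : Module.Basis (Fin (n + m)) ℂ L,
      (∀ i : Fin (n + m), if (i : ℕ) % 2 = 0 then e i ∈ S.L1 else e i ∈ S.L0) ∧
      (∀ i j : Fin (n + m), S.bracket (e i) (e j) =
        if h : (j : ℕ) = 0 ∧ (i : ℕ) + 1 < n + m then e ⟨(i : ℕ) + 1, h.2⟩
        else if h2 : (j : ℕ) = 1 ∧ (i : ℕ) + 2 < n + m then
          (2 : ℂ) • e ⟨(i : ℕ) + 2, h2.2⟩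
        else 0) ∧
      (Even (n + m) → m = n) ∧ (Odd (n + m) → m = n + 1)) := by
  classical
  obtain ⟨-, hbot, hne⟩ := hnil
  rw [Nat.add_sub_cancel] at hbot
  have hfr : Module.finrank ℂ L = n + m := by
    rw [← Submodule.finrank_add_eq_of_isCompl S.compl, hn, hm]
  by_cases hN0 : n + m = 0
  · left
    have hm0 : m = 0 := by omega
    have hn0 : n = 0 := by omega
    have hL : ∀ x : L, x = 0 := by
      intro x
      have hx : x ∈ S.term (n + m) := by rw [hN0, S.term_zero]; exact Submodule.mem_top
      rw [hbot] at hx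
      simpa using hx
    have hsub : Subsingleton L := ⟨fun a b => by rw [hL a, hL b]⟩
    subst hm0; subst hn0
    exact ⟨rfl, Module.Basis.empty L, fun i => i.elim0, fun i j => i.elim0⟩
  · have hstab : ∀ k, S.term (k + 1) = S.term k → ∀ j, S.term (k + j) = S.term k := by
      intro k hk j
      induction j with
      | zero => rfl
      | succ j ih =>
        show S.term ((k + j) + 1) = S.term k
        rw [S.term_succ, ih, ← S.term_succ, hk]
    have hstrict : ∀ k, k < n + m → S.term (k + 1) < S.term k := by
      intro k hk
      refine lt_of_le_of_ne (S.term_succ_le k) (fun h => ?_)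
      have h2 := hstab k h (n + m - k)
      rw [show k + (n + m - k) = n + m by omega] at h2
      exact hne k (by omega) (by rw [← h2]; exact hbot)
    have hrank : ∀ j k, k + j = n + m → j ≤ Module.finrank ℂ (S.term k) := by
      intro j
      induction j with
      | zero => intro k _; exact Nat.zero_le _
      | succ j ih =>
        intro k hk
        have h1 := Submodule.finrank_lt_finrank_of_lt (hstrict k (by omega))
        have h2 := ih (k + 1) (by omega)
        omega
    obtain ⟨e, heh, heT⟩ : ∃ e : L, (e ∈ S.L0 ∨ e ∈ S.L1) ∧ e ∉ S.term 1 := by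
      by_cases h0 : S.L0 ≤ S.term 1
      · by_cases h1 : S.L1 ≤ S.term 1
        · exfalso
          have htop : (⊤ : Submodule ℂ L) ≤ S.term 1 := by
            rw [← S.compl.codisjoint.eq_top]; exact sup_le h0 h1
          exact (hstrict 0 (by omega)).not_ge (le_trans le_top htop)
        · obtain ⟨x, hx1, hx2⟩ := SetLike.not_le_iff_exists.mp h1
          exact ⟨x, Or.inr hx1, hx2⟩
      · obtain ⟨x, hx1, hx2⟩ := SetLike.not_le_iff_exists.mp h0
        exact ⟨x, Or.inl hx1, hx2⟩
    have hsup : Submodule.span ℂ {e} ⊔ S.term 1 = ⊤ := by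
      apply Submodule.eq_top_of_finrank_eq
      have hlt : S.term 1 < Submodule.span ℂ {e} ⊔ S.term 1 := by
        refine lt_of_le_of_ne le_sup_right (fun h => heT ?_)
        rw [h]
        exact Submodule.mem_sup_left (Submodule.mem_span_singleton_self e)
      have h1 := Submodule.finrank_lt_finrank_of_lt hlt
      have h2 := hrank (n + m - 1) 1 (by omega)
      have h3 := Submodule.finrank_le (Submodule.span ℂ {e} ⊔ S.term 1)
      rw [hfr]
      omega
    obtain ⟨v, hv0, hvs⟩ : ∃ v : ℕ → L, v 0 = e ∧ ∀ i, v (i + 1) = S.bracket (v i) e :=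
      ⟨fun i => Nat.rec e (fun _ w => S.bracket w e) i, rfl, fun i => rfl⟩
    have hvterm : ∀ i, v i ∈ S.term i := by
      intro i; induction i with
      | zero => rw [hv0, S.term_zero]; exact Submodule.mem_top
      | succ i ih => rw [hvs, S.term_succ]; exact S.bracket_mem ih Submodule.mem_top
    have hvz : ∀ i, n + m ≤ i → v i = 0 := by
      intro i hi
      have h2 := S.term_le_of_le hi (hvterm i)
      rw [hbot] at h2
      simpa using h2
    have hbr1 : ∀ i, S.bracket (v i) (v 0) = v (i + 1) := by
      intro i; rw [hv0, hvs]
    have hD : ∀ k, S.term k = Submodule.span ℂ {v k} ⊔ S.term (k + 1) := by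
      intro k; induction k with
      | zero => rw [S.term_zero, hv0]; exact hsup.symm
      | succ k ih =>
        refine le_antisymm ?_ (sup_le (Submodule.span_le.mpr
          (Set.singleton_subset_iff.mpr (hvterm (k + 1)))) (S.term_succ_le (k + 1)))
        rw [S.term_succ k]
        apply S.bracketSpan_le'
        intro a ha b _
        rw [ih] at ha
        obtain ⟨a0, ha0, a1, ha1, hasum⟩ := Submodule.mem_sup.mp ha
        have hb : b ∈ Submodule.span ℂ {e} ⊔ S.term 1 := by rw [hsup]; exact Submodule.mem_top
        obtain ⟨b0, hb0, b1, hb1, hbsum⟩ := Submodule.mem_sup.mp hb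
        have m1 : S.bracket a0 b0 ∈ Submodule.span ℂ {v (k + 1)} := by
          obtain ⟨c, rfl⟩ := Submodule.mem_span_singleton.mp ha0
          obtain ⟨d, rfl⟩ := Submodule.mem_span_singleton.mp hb0
          simp only [map_smul, LinearMap.smul_apply]
          rw [← hvs k]
          exact Submodule.smul_mem _ _ (Submodule.smul_mem _ _
            (Submodule.mem_span_singleton_self _))
        have ha0' : a0 ∈ S.term k :=
          Submodule.span_le.mpr (Set.singleton_subset_iff.mpr (hvterm k)) ha0
        have m2 : S.bracket a0 b1 ∈ S.term (k + 1 + 1) :=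
          S.bs_term 1 k (S.bracket_mem ha0' hb1)
        have m3 : S.bracket a1 b0 ∈ S.term (k + 1 + 1) := by
          rw [S.term_succ]; exact S.bracket_mem ha1 Submodule.mem_top
        have m4 : S.bracket a1 b1 ∈ S.term (k + 1 + 1) :=
          S.term_succ_le _ (S.bs_term 1 (k + 1) (S.bracket_mem ha1 hb1))
        rw [← hasum, ← hbsum]
        simp only [map_add, LinearMap.add_apply]
        exact add_mem (add_mem (Submodule.mem_sup_left m1) (Submodule.mem_sup_right m3))
          (add_mem (Submodule.mem_sup_right m2) (Submodule.mem_sup_right m4))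
    have hspanle : ∀ j k, n + m ≤ k + j →
        S.term k ≤ Submodule.span ℂ (Set.range fun i : Fin (n + m) => v ↑i) := by
      intro j
      induction j with
      | zero =>
        intro k hk
        refine le_trans (S.term_le_of_le (by omega : n + m ≤ k)) ?_
        rw [hbot]
        exact bot_le
      | succ j ih =>
        intro k hk
        rw [hD k]
        apply sup_le
        · apply Submodule.span_le.mpr
          apply Set.singleton_subset_iff.mpr
          by_cases hkN : k < n + m
          · exact Submodule.subset_span ⟨⟨k, hkN⟩, rfl⟩
          · rw [hvz k (by omega)]
            exact Submodule.zero_mem _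
        · exact ih (k + 1) (by omega)
    have hspan : ⊤ ≤ Submodule.span ℂ (Set.range fun i : Fin (n + m) => v ↑i) := by
      have h := hspanle (n + m) 0 (by omega)
      rw [S.term_zero] at h
      exact h
    set bas : Module.Basis (Fin (n + m)) ℂ L :=
      basisOfTopLeSpanOfCardEqFinrank (fun i : Fin (n + m) => v ↑i) hspan
        (by rw [Fintype.card_fin, hfr]) with hbas
    have hbe : ∀ i : Fin (n + m), bas i = v ↑i := by
      intro i
      rw [hbas]
      exact congrFun (coe_basisOfTopLeSpanOfCardEqFinrank _ _ _) i
    rcases heh with heL0 | heL1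
    · -- even generator : case m = 0
      left
      have hvL0 : ∀ i, v i ∈ S.L0 := by
        intro i; induction i with
        | zero => rw [hv0]; exact heL0
        | succ i ih => rw [hvs]; exact S.g00 _ ih _ heL0
      have hL1bot : S.L1 = ⊥ := by
        rw [eq_bot_iff]
        intro x hx
        have hxL0 : x ∈ S.L0 := by
          have hx2 : x ∈ Submodule.span ℂ (Set.range fun i : Fin (n + m) => v ↑i) :=
            hspan Submodule.mem_top
          refine Submodule.span_le.mpr ?_ hx2
          rintro y ⟨i, rfl⟩
          exact hvL0 ↑i
        exact S.compl.disjoint.le_bot (Submodule.mem_inf.mpr ⟨hxL0, hx⟩)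
      have hm0 : m = 0 := by rw [← hm, hL1bot, finrank_bot]
      subst hm0
      have hzero : ∀ j, 1 ≤ j → ∀ i, S.bracket (v i) (v j) = 0 := by
        intro j hj
        induction j, hj using Nat.le_induction with
        | base =>
          intro i
          have hv1 : v 1 = S.bracket e e := by
            have h := hvs 0; rw [hv0] at h; exact h
          rw [hv1, S.leib00 (v i) e heL0 e heL0, sub_self]
        | succ j hj ih =>
          intro i
          rw [hvs j, S.leib00 (v i) (v j) (hvL0 j) e heL0, ih i, ← hvs i, ih (i + 1)]
          simp
      have hbeA : ∀ i : Fin n, (bas.reindex (finCongr (Nat.add_zero n))) i = v ↑i := by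
        intro i
        rw [Module.Basis.reindex_apply]
        exact hbe _
      refine ⟨rfl, bas.reindex (finCongr (Nat.add_zero n)),
        fun i => by rw [hbeA]; exact hvL0 _, fun i j => ?_⟩
      rw [hbeA i, hbeA j]
      by_cases hj0 : (j : ℕ) = 0
      · rw [hj0]
        by_cases hi : (i : ℕ) + 1 < n
        · rw [dif_pos ⟨rfl, hi⟩, hbeA]
          exact hbr1 ↑i
        · rw [dif_neg (fun h => hi h.2), hbr1 ↑i]
          have := i.isLt
          exact hvz _ (by omega)
      · rw [dif_neg (fun h => hj0 h.1)]
        exact hzero ↑j (by omega) ↑i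
    · -- odd generator
      right
      have hpar : ∀ i, (i % 2 = 0 → v i ∈ S.L1) ∧ (i % 2 = 1 → v i ∈ S.L0) := by
        intro i; induction i with
        | zero => exact ⟨fun _ => by rw [hv0]; exact heL1, fun h => by omega⟩
        | succ i ih =>
          constructor
          · intro h
            rw [hvs]
            exact S.g01 _ (ih.2 (by omega)) _ heL1
          · intro h
            rw [hvs]
            exact S.g11 _ (ih.1 (by omega)) _ heL1
      have hv1e : v 1 = S.bracket e e := by
        have h := hvs 0; rw [hv0] at h; exact h
      have hbr2 : ∀ i, S.bracket (v i) (v 1) = (2 : ℂ) • v (i + 2) := by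
        intro i
        rw [hv1e, S.leib11 (v i) e heL1 e heL1, ← hvs i, ← hvs (i + 1), two_smul]
      have hzero : ∀ j, 2 ≤ j → ∀ i, S.bracket (v i) (v j) = 0 := by
        intro j hj
        induction j, hj using Nat.le_induction with
        | base =>
          intro i
          have hv2 : v 2 = S.bracket (v 1) e := hvs 1
          rw [hv2, S.leib01 (v i) (v 1) ((hpar 1).2 rfl) e heL1, hbr2 i, ← hvs i, hbr2 (i + 1)]
          simp only [map_smul, LinearMap.smul_apply]
          rw [← hvs (i + 2), show i + 1 + 2 = i + 2 + 1 by omega]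
          exact sub_self _
        | succ j hj ih =>
          intro i
          rw [hvs j]
          rcases Nat.even_or_odd j with hje | hjo
          · have hL1 : v j ∈ S.L1 := (hpar j).1 (Nat.even_iff.mp hje)
            rw [S.leib11 (v i) (v j) hL1 e heL1, ih i, ← hvs i, ih (i + 1)]
            simp
          · have hL0 : v j ∈ S.L0 := (hpar j).2 (Nat.odd_iff.mp hjo)
            rw [S.leib01 (v i) (v j) hL0 e heL1, ih i, ← hvs i, ih (i + 1)]
            simp
      have hmge : (n + m + 1) / 2 ≤ m := by
        obtain ⟨g, hgval⟩ : ∃ g : Fin ((n + m + 1) / 2) → Fin (n + m),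
            ∀ k, (g k : ℕ) = 2 * ↑k :=
          ⟨fun k => ⟨2 * ↑k, by have := k.isLt; omega⟩, fun k => rfl⟩
        have hginj : Function.Injective g := by
          intro a b hab
          have h2 : (g a : ℕ) = (g b : ℕ) := by rw [hab]
          rw [hgval, hgval] at h2
          exact Fin.ext (by omega)
        have hind : LinearIndependent ℂ (⇑bas ∘ g) := bas.linearIndependent.comp g hginj
        have hle : Submodule.span ℂ (Set.range (⇑bas ∘ g)) ≤ S.L1 := by
          apply Submodule.span_le.mpr
          rintro x ⟨k, rfl⟩
          have hxx : (⇑bas ∘ g) k = v ↑(g k) := hbe (g k)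
          rw [hxx, hgval]
          exact (hpar _).1 (by omega)
        have hcard := finrank_span_eq_card hind
        rw [Fintype.card_fin] at hcard
        have hmono := Submodule.finrank_mono hle
        omega
      have hnge : (n + m) / 2 ≤ n := by
        obtain ⟨g, hgval⟩ : ∃ g : Fin ((n + m) / 2) → Fin (n + m),
            ∀ k, (g k : ℕ) = 2 * ↑k + 1 :=
          ⟨fun k => ⟨2 * ↑k + 1, by have := k.isLt; omega⟩, fun k => rfl⟩
        have hginj : Function.Injective g := by
          intro a b hab
          have h2 : (g a : ℕ) = (g b : ℕ) := by rw [hab]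
          rw [hgval, hgval] at h2
          exact Fin.ext (by omega)
        have hind : LinearIndependent ℂ (⇑bas ∘ g) := bas.linearIndependent.comp g hginj
        have hle : Submodule.span ℂ (Set.range (⇑bas ∘ g)) ≤ S.L0 := by
          apply Submodule.span_le.mpr
          rintro x ⟨k, rfl⟩
          have hxx : (⇑bas ∘ g) k = v ↑(g k) := hbe (g k)
          rw [hxx, hgval]
          exact (hpar _).2 (by omega)
        have hcard := finrank_span_eq_card hind
        rw [Fintype.card_fin] at hcard
        have hmono := Submodule.finrank_mono hle
        omega
      refine ⟨bas, fun i => ?_, fun i j => ?_, fun hev => ?_, fun hodd => ?_⟩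
      · rw [hbe]
        split_ifs with h
        · exact (hpar ↑i).1 h
        · exact (hpar ↑i).2 (by omega)
      · rw [hbe i, hbe j]
        by_cases hj0 : (j : ℕ) = 0
        · rw [hj0]
          by_cases hi : (i : ℕ) + 1 < n + m
          · rw [dif_pos ⟨rfl, hi⟩, hbe]
            exact hbr1 ↑i
          · rw [dif_neg (fun h => hi h.2), dif_neg (fun h => absurd h.1 (by omega)),
              hbr1 ↑i]
            have := i.isLt
            exact hvz _ (by omega)
        · by_cases hj1 : (j : ℕ) = 1
          · rw [hj1, dif_neg (fun h => absurd h.1 (by omega))]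
            by_cases hi : (i : ℕ) + 2 < n + m
            · rw [dif_pos ⟨rfl, hi⟩, hbe]
              exact hbr2 ↑i
            · rw [dif_neg (fun h => hi h.2), hbr2 ↑i, hvz _ (by omega), smul_zero]
          · rw [dif_neg (fun h => hj0 h.1), dif_neg (fun h => hj1 h.1)]
            exact hzero ↑j (by omega) ↑i
      · have := Nat.even_iff.mp hev
        omega
      · have := Nat.odd_iff.mp hodd
        omega
end

section
/- In an arbitrary zero-filiform Leibniz superalgebra L ∈ ZF^{n,m} there exists a basis {x₁,…,x_n, y₁,…,y_m} with x_i ∈ L₀ and y_j ∈ L₁ satisfying: [x_i,x₁]=x_{i+1} for 1 ≤ i ≤ n−1, [x_n,x₁]=0, [x_i,x_k]=0 for 1 ≤ i ≤ n and 2 ≤ k ≤ n, [y_j,x₁]=y_{j+1} for 1 ≤ j ≤ m−1, [y_m,x₁]=0, and [y_j,x_k]=0 for 1 ≤ j ≤ m and 2 ≤ k ≤ n. -/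
section AuxLemmas
open Module LinearMap
variable {V : Type*} [AddCommGroup V] [Module ℂ V] [FiniteDimensional ℂ V]

lemma rank_pow_succ_le (f : Module.End ℂ V) (j : ℕ) :
    Module.finrank ℂ (range (f ^ (j+1))) ≤ Module.finrank ℂ (range (f ^ j)) := by
  apply Submodule.finrank_mono
  rw [pow_succ]
  exact range_comp_le_range f (f ^ j)

lemma jordan_single {f : Module.End ℂ V} {k : ℕ} (hdim : Module.finrank ℂ V = k)
    (h : HasJordanType f [k]) :
    0 < k ∧ (∀ j ≤ k, Module.finrank ℂ (range (f ^ j)) = k - j) ∧ f ^ k = 0 ∧ f ^ (k-1) ≠ 0 := by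
  obtain ⟨-, hpos, hcount⟩ := h
  have hk : 0 < k := hpos k (List.mem_singleton_self k)
  have hrank : ∀ j, j ≤ k → Module.finrank ℂ (range (f ^ j)) = k - j := by
    intro j hj
    induction j with
    | zero =>
      rw [pow_zero]
      rw [show (1 : Module.End ℂ V) = LinearMap.id from rfl, LinearMap.range_id, finrank_top, hdim]
      omega
    | succ j ih =>
      have hij := ih (Nat.le_of_succ_le hj)
      have hc := hcount j
      have hcnt1 : List.countP (fun a => decide (j + 1 ≤ a)) [k] = 1 := by
        simp [List.countP_cons, hj, show j < k by omega]
      rw [hcnt1] at hc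
      have hle := rank_pow_succ_le f j
      omega
  refine ⟨hk, hrank, ?_, ?_⟩
  · have h0 : Module.finrank ℂ (range (f ^ k)) = 0 := by simpa using hrank k le_rfl
    have hb : range (f ^ k) = ⊥ := Submodule.finrank_eq_zero.mp h0
    exact range_eq_bot.mp hb
  · intro hzero
    have h1 : Module.finrank ℂ (range (f ^ (k-1))) = 1 := by
      rw [hrank (k-1) (Nat.sub_le k 1)]; omega
    rw [hzero, LinearMap.range_zero, finrank_bot] at h1
    exact absurd h1 (by norm_num)

omit [FiniteDimensional ℂ V] in
lemma pow_eq_zero_of_ge {f : Module.End ℂ V} {k : ℕ} (hfk : f ^ k = 0) {t : ℕ} (ht : k ≤ t) :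
    f ^ t = 0 := by
  rw [← Nat.sub_add_cancel ht, pow_add, hfk, mul_zero]

lemma chain_li {f : Module.End ℂ V} {k : ℕ} (hfk : f ^ k = 0) {v : V}
    (hv : (f ^ (k-1)) v ≠ 0) :
    LinearIndependent ℂ (fun i : Fin k => (f ^ (i:ℕ)) v) := by
  rcases Nat.eq_zero_or_pos k with hk0 | hk0
  · subst hk0; exact linearIndependent_empty_type
  rw [Fintype.linearIndependent_iff]
  intro g hg
  have key : ∀ N : ℕ, ∀ i : Fin k, (i:ℕ) = N → g i = 0 := by
    intro N
    induction N using Nat.strong_induction_on with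
    | _ N ih =>
      intro i hiN
      have hNk : N < k := hiN ▸ i.isLt
      have happ := congrArg (⇑(f ^ (k - 1 - N))) hg
      rw [map_sum, map_zero] at happ
      rw [Finset.sum_eq_single i (fun b _ hb => ?side) (by simp)] at happ
      case side =>
        rw [map_smul]
        rcases lt_or_gt_of_ne (fun hbv : (b:ℕ) = N => hb (Fin.ext (hbv.trans hiN.symm))) with hlt | hgt
        · rw [ih (b:ℕ) hlt b rfl, zero_smul]
        · rw [← Module.End.mul_apply, ← pow_add,
            pow_eq_zero_of_ge hfk (by omega), LinearMap.zero_apply, smul_zero]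
      rw [map_smul, ← Module.End.mul_apply, ← pow_add] at happ
      have heq : k - 1 - N + (i:ℕ) = k - 1 := by omega
      rw [heq] at happ
      rcases smul_eq_zero.mp happ with h | h
      · exact h
      · exact absurd h hv
  exact fun i => key i i rfl

lemma coe_restrict_pow {M : Type*} [AddCommGroup M] [Module ℂ M] {p : Submodule ℂ M}
    (f : M →ₗ[ℂ] M) (h : ∀ x ∈ p, f x ∈ p) (j : ℕ) (z : p) :
    ((((f.restrict h) ^ j) z : p) : M) = (f ^ j) (z : M) := by
  induction j generalizing z with
  | zero => simp
  | succ j ih =>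
    rw [pow_succ, pow_succ, Module.End.mul_apply, Module.End.mul_apply,
      ih ((f.restrict h) z), LinearMap.restrict_coe_apply]

end AuxLemmas


open LeibnizSuper in
/-- In an arbitrary zero-filiform Leibniz superalgebra `L ∈ ZF^{n,m}` there is an
adapted basis `{x₁,…,x_n, y₁,…,y_m}` (Theorem 2.2). -/
theorem exists_adapted_basis {L : Type*} [AddCommGroup L] [Module ℂ L]
    [FiniteDimensional ℂ L] (S : LeibnizSuper L) (n m : ℕ)
    (hzf : S.ZeroFiliform n m) :
    ∃ x y : ℕ → L, S.IsAdaptedPair n m x y := by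
  obtain ⟨hn0, hm0, hcs⟩ := hzf
  obtain ⟨⟨x, hx0, hxB, hxJ⟩, -, ⟨x', hx'0, hx'B, hx'J⟩, -⟩ := hcs
  have hR : ∀ a : L, (S.R x) a = S.bracket a x := fun a => rfl
  set f : Module.End ℂ S.L0 := S.R0 x hx0 with hfdef
  obtain ⟨hn1, hrank0, hfn, hfn1⟩ := jordan_single hn0 hxJ
  have hcoe : ∀ (j : ℕ) (z : S.L0), (((f ^ j) z : S.L0) : L) = ((S.R x) ^ j) (z : L) :=
    coe_restrict_pow (S.R x) (fun z hz => S.g00 z hz x hx0)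
  set xt : S.L0 := ⟨x, hx0⟩ with hxtdef
  have hRnx : ∀ j : ℕ, ((S.R x) ^ j) x = (((f ^ j) xt : S.L0) : L) :=
    fun j => (hcoe j xt).symm
  have hmem0 : ∀ j : ℕ, ((S.R x) ^ j) x ∈ S.L0 := by
    intro j; rw [hRnx j]; exact SetLike.coe_mem _
  have hmemL0 : ∀ (u : L), u ∈ S.L0 → ∀ j : ℕ, ((S.R x) ^ j) u ∈ S.L0 := by
    intro u hu j
    have := hcoe j ⟨u, hu⟩
    rw [← this]; exact SetLike.coe_mem _
  set B := S.bracketSpan S.L0 S.L0 with hBdef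
  have hBL0 : B ≤ S.L0 := by
    rw [hBdef, LeibnizSuper.bracketSpan]
    refine Submodule.span_le.mpr ?_
    rintro z ⟨a, ha, b, hb, rfl⟩
    exact S.g00 a ha b hb
  have hbr : ∀ (u : L) (j : ℕ), S.bracket (((S.R x) ^ j) u) x = ((S.R x) ^ (j+1)) u := by
    intro u j; rw [pow_succ']; exact rfl
  have hchainB : ∀ (u : L), u ∈ S.L0 → ∀ j : ℕ, 1 ≤ j → ((S.R x) ^ j) u ∈ B := by
    intro u hu j hj
    obtain ⟨i, rfl⟩ := Nat.exists_eq_add_of_le hj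
    rw [add_comm, ← hbr u i]
    exact Submodule.subset_span ⟨_, hmemL0 u hu i, x, hx0, rfl⟩
  -- x itself is a cyclic vector for f
  have hxcyc : (f ^ (n-1)) xt ≠ 0 := by
    intro hxc
    obtain ⟨v, hv⟩ := DFunLike.ne_iff.mp hfn1
    rw [LinearMap.zero_apply] at hv
    have hliv := chain_li hfn hv
    have hinj : Function.Injective
        (fun i : Fin (n-1) => (⟨(i:ℕ)+1, by have := i.isLt; omega⟩ : Fin n)) := by
      intro a b hab
      have hv2 := congrArg Fin.val hab
      simp only [] at hv2
      exact Fin.ext (by omega)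
    have hliW : LinearIndependent ℂ (fun i : Fin (n-1) => (f ^ ((i:ℕ)+1)) v) := by
      have h := hliv.comp _ hinj
      have he : ((fun i : Fin n => (f ^ (i:ℕ)) v) ∘
          (fun i : Fin (n-1) => (⟨(i:ℕ)+1, by have := i.isLt; omega⟩ : Fin n))) =
          (fun i : Fin (n-1) => (f ^ ((i:ℕ)+1)) v) := by
        funext i; rfl
      rwa [he] at h
    set W : Submodule ℂ S.L0 :=
      Submodule.span ℂ (Set.range (fun i : Fin (n-1) => (f ^ ((i:ℕ)+1)) v)) with hWdef
    have hfrW : Module.finrank ℂ W = n - 1 := by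
      rw [hWdef, finrank_span_eq_card hliW, Fintype.card_fin]
    have hWK : W ≤ LinearMap.ker (f ^ (n-1)) := by
      rw [hWdef, Submodule.span_le]
      rintro z ⟨i, rfl⟩
      simp only [SetLike.mem_coe, LinearMap.mem_ker]
      rw [← Module.End.mul_apply, ← pow_add,
        pow_eq_zero_of_ge hfn (by omega), LinearMap.zero_apply]
    have hfrK : Module.finrank ℂ (LinearMap.ker (f ^ (n-1))) = n - 1 := by
      have hrn := LinearMap.finrank_range_add_finrank_ker (f ^ (n-1))
      rw [hrank0 (n-1) (by omega), hn0] at hrn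
      omega
    have hWKeq : W = LinearMap.ker (f ^ (n-1)) :=
      Submodule.eq_of_le_of_finrank_le hWK (le_of_eq (hfrK.trans hfrW.symm))
    have hxW : xt ∈ W := by rw [hWKeq]; exact LinearMap.mem_ker.mpr hxc
    have hmapB : Submodule.map S.L0.subtype W ≤ B := by
      rw [hWdef, Submodule.map_span]
      refine Submodule.span_le.mpr ?_
      rintro z ⟨z', ⟨i, rfl⟩, rfl⟩
      show (((f ^ ((i:ℕ)+1)) v : S.L0) : L) ∈ B
      rw [hcoe]
      exact hchainB (v : L) v.2 _ (by omega)
    exact hxB (hmapB ⟨xt, hxW, rfl⟩)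
  have hlix := chain_li hfn hxcyc
  set xb : ℕ → L := fun i => ((S.R x) ^ (i-1)) x with hxbdef
  have hxb1 : xb 1 = x := rfl
  set cx : Fin n → L := fun i => xb ((i:ℕ)+1) with hcxdef
  have hcx : ∀ i : Fin n, cx i = S.L0.subtype ((f ^ (i:ℕ)) xt) :=
    fun i => (hcoe (i:ℕ) xt).symm
  have hlicx : LinearIndependent ℂ cx := by
    rw [show cx = S.L0.subtype ∘ (fun i : Fin n => (f ^ (i:ℕ)) xt) from funext hcx]
    exact hlix.map' _ (Submodule.ker_subtype S.L0)
  have hspanL0 : Submodule.span ℂ (Set.range cx) = S.L0 := by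
    have htop : Submodule.span ℂ (Set.range (fun i : Fin n => (f ^ (i:ℕ)) xt)) = ⊤ := by
      apply Submodule.eq_of_le_of_finrank_le le_top
      have h1 : Module.finrank ℂ (⊤ : Submodule ℂ S.L0) = n := by rw [finrank_top, hn0]
      have h2 : Module.finrank ℂ
          (Submodule.span ℂ (Set.range (fun i : Fin n => (f ^ (i:ℕ)) xt))) = n := by
        rw [finrank_span_eq_card hlix, Fintype.card_fin]
      rw [h1, h2]
    rw [show Set.range cx = S.L0.subtype '' Set.range (fun i : Fin n => (f ^ (i:ℕ)) xt) by
        rw [← Set.range_comp]; exact congrArg Set.range (funext hcx),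
      ← Submodule.map_span, htop, Submodule.map_subtype_top]
  have hBlt : B < S.L0 := lt_of_le_of_ne hBL0 (fun h => hxB (h.symm ▸ hx0))
  have hfrB : Module.finrank ℂ B ≤ n - 1 := by
    have := Submodule.finrank_lt_finrank_of_lt hBlt
    rw [hn0] at this; omega
  set tx : Fin (n-1) → L := fun i => xb ((i:ℕ)+2) with htxdef
  have hinj2 : Function.Injective
      (fun i : Fin (n-1) => (⟨(i:ℕ)+1, by have := i.isLt; omega⟩ : Fin n)) := by
    intro a b hab
    have hv2 := congrArg Fin.val hab
    simp only [] at hv2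
    exact Fin.ext (by omega)
  have hlitx : LinearIndependent ℂ tx := by
    have h := hlicx.comp _ hinj2
    have he : (cx ∘ (fun i : Fin (n-1) => (⟨(i:ℕ)+1, by have := i.isLt; omega⟩ : Fin n))) =
        tx := by
      funext i; rfl
    rwa [he] at h
  set Wx : Submodule ℂ L := Submodule.span ℂ (Set.range tx) with hWxdef
  have hWxB : Wx ≤ B := by
    rw [hWxdef, Submodule.span_le]
    rintro z ⟨i, rfl⟩
    show ((S.R x) ^ ((i:ℕ)+1)) x ∈ B
    exact hchainB x hx0 ((i:ℕ)+1) (by omega)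
  have hWxeq : Wx = B := by
    apply Submodule.eq_of_le_of_finrank_le hWxB
    rw [hWxdef, finrank_span_eq_card hlitx, Fintype.card_fin]
    exact hfrB
  have hann : ∀ j : ℕ, 1 ≤ j → ∀ a : L, S.bracket a (((S.R x) ^ j) x) = 0 := by
    intro j hj
    induction j, hj using Nat.le_induction with
    | base =>
      intro a
      have h1 : ((S.R x) ^ 1) x = S.bracket x x := by rw [pow_one]; rfl
      rw [h1, S.leib00 a x hx0 x hx0, sub_self]
    | succ j hj ih =>
      intro a
      rw [← hbr x j, S.leib00 a _ (hmem0 j) x hx0, ih a, ih (S.bracket a x),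
        map_zero, LinearMap.zero_apply, sub_zero]
  have hWxann : ∀ z ∈ Wx, ∀ a : L, S.bracket a z = 0 := by
    intro z hz a
    rw [hWxdef] at hz
    induction hz using Submodule.span_induction with
    | mem z hzm =>
      obtain ⟨i, rfl⟩ := hzm
      exact hann ((i:ℕ)+1) (by omega) a
    | zero => exact map_zero _
    | add y w _ _ hy hw => rw [map_add, hy, hw, add_zero]
    | smul c y _ hy => rw [map_smul, hy, smul_zero]
  have hrangecx : Set.range cx = insert x (Set.range tx) := by
    ext z
    simp only [Set.mem_range, Set.mem_insert_iff]
    constructor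
    · rintro ⟨i, rfl⟩
      rcases Nat.eq_zero_or_pos (i:ℕ) with h0 | h0
      · left
        show xb ((i:ℕ)+1) = x
        rw [h0]
        exact hxb1
      · right
        refine ⟨⟨(i:ℕ)-1, by omega⟩, ?_⟩
        show xb (((i:ℕ)-1)+2) = xb ((i:ℕ)+1)
        congr 1
        omega
    · rintro (rfl | ⟨i, rfl⟩)
      · exact ⟨⟨0, by omega⟩, hxb1⟩
      · exact ⟨⟨(i:ℕ)+1, by omega⟩, rfl⟩
  have hx'mem : x' ∈ Submodule.span ℂ (insert x (Set.range tx)) := by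
    rw [← hrangecx, hspanL0]; exact hx'0
  obtain ⟨c, z, hzW, hx'eq⟩ := Submodule.mem_span_insert.mp hx'mem
  rw [← hWxdef] at hzW
  have hzB : z ∈ B := hWxeq ▸ hzW
  have hc : c ≠ 0 := fun h => hx'B (by rw [hx'eq, h, zero_smul, zero_add]; exact hzB)
  have hRrel : ∀ a : L, S.bracket a x' = c • S.bracket a x := by
    intro a
    rw [hx'eq, map_add, map_smul, hWxann z hzW a, add_zero]
  set g : Module.End ℂ S.L1 := S.R1 x hx0 with hgdef
  set g' : Module.End ℂ S.L1 := S.R1 x' hx'0 with hg'def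
  have hgcoe : ∀ (j : ℕ) (w : S.L1), (((g ^ j) w : S.L1) : L) = ((S.R x) ^ j) (w : L) :=
    coe_restrict_pow (S.R x) (fun w hw => S.g10 w hw x hx0)
  have hg'g : g' = c • g := by
    refine LinearMap.ext fun w => Subtype.ext ?_
    show ((g' w : S.L1) : L) = (((c • g) w : S.L1) : L)
    calc ((g' w : S.L1) : L) = (S.R x') (w : L) := LinearMap.restrict_coe_apply _ _ _
      _ = c • ((S.R x) (w : L)) := hRrel (w : L)
      _ = (((c • g) w : S.L1) : L) := by
          simp only [LinearMap.smul_apply, Submodule.coe_smul, SetLike.val_smul, hgdef,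
            LeibnizSuper.R1, LinearMap.restrict_coe_apply]
          rfl
  have hgJ : HasJordanType g [m] := by
    obtain ⟨hs, hp, hcnt⟩ := hx'J
    have hr : ∀ j : ℕ, LinearMap.range (g' ^ j) = LinearMap.range (g ^ j) := by
      intro j
      rw [hg'g, smul_pow, LinearMap.range_smul _ _ (pow_ne_zero j hc)]
    exact ⟨hs, hp, fun j => by rw [← hr j, ← hr (j+1)]; exact hcnt j⟩
  obtain ⟨hm1, hrank1, hgm, hgm1⟩ := jordan_single hm0 hgJ
  obtain ⟨w, hw⟩ := DFunLike.ne_iff.mp hgm1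
  rw [LinearMap.zero_apply] at hw
  have hliw := chain_li hgm hw
  set yb : ℕ → L := fun j => ((S.R x) ^ (j-1)) (w : L) with hybdef
  have hRnw : ∀ j : ℕ, ((S.R x) ^ j) (w : L) = (((g ^ j) w : S.L1) : L) :=
    fun j => (hgcoe j w).symm
  have hmem1 : ∀ j : ℕ, ((S.R x) ^ j) (w : L) ∈ S.L1 := by
    intro j; rw [hRnw j]; exact SetLike.coe_mem _
  set cy : Fin m → L := fun j => yb ((j:ℕ)+1) with hcydef
  have hcy : ∀ j : Fin m, cy j = S.L1.subtype ((g ^ (j:ℕ)) w) :=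
    fun j => (hgcoe (j:ℕ) w).symm
  have hlicy : LinearIndependent ℂ cy := by
    rw [show cy = S.L1.subtype ∘ (fun j : Fin m => (g ^ (j:ℕ)) w) from funext hcy]
    exact hliw.map' _ (Submodule.ker_subtype S.L1)
  have hspanL1 : Submodule.span ℂ (Set.range cy) = S.L1 := by
    have htop : Submodule.span ℂ (Set.range (fun j : Fin m => (g ^ (j:ℕ)) w)) = ⊤ := by
      apply Submodule.eq_of_le_of_finrank_le le_top
      have h1 : Module.finrank ℂ (⊤ : Submodule ℂ S.L1) = m := by rw [finrank_top, hm0]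
      have h2 : Module.finrank ℂ
          (Submodule.span ℂ (Set.range (fun j : Fin m => (g ^ (j:ℕ)) w))) = m := by
        rw [finrank_span_eq_card hliw, Fintype.card_fin]
      rw [h1, h2]
    rw [show Set.range cy = S.L1.subtype '' Set.range (fun j : Fin m => (g ^ (j:ℕ)) w) by
        rw [← Set.range_comp]; exact congrArg Set.range (funext hcy),
      ← Submodule.map_span, htop, Submodule.map_subtype_top]
  refine ⟨xb, yb, ?_, ?_, ?_, ?_, ?_, ?_, ?_, ?_, ?_, ?_⟩
  · intro i _ _
    exact hmem0 (i-1)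
  · intro j _ _
    exact hmem1 (j-1)
  · have hdisj : Disjoint (Submodule.span ℂ (Set.range cx))
        (Submodule.span ℂ (Set.range cy)) := by
      rw [hspanL0, hspanL1]; exact S.compl.disjoint
    exact hlicx.sum_type hlicy hdisj
  · show Submodule.span ℂ (Set.range (Sum.elim cx cy)) = ⊤
    rw [Set.Sum.elim_range, Submodule.span_union, hspanL0, hspanL1]
    exact codisjoint_iff.mp S.compl.codisjoint
  · intro i hi _
    show S.bracket (((S.R x) ^ (i-1)) x) (xb 1) = ((S.R x) ^ (i+1-1)) x
    rw [hxb1, hbr x (i-1), show i - 1 + 1 = i + 1 - 1 from by omega]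
  · show S.bracket (((S.R x) ^ (n-1)) x) (xb 1) = 0
    rw [hxb1, hbr x (n-1), show n - 1 + 1 = n from by omega, hRnx n, hfn]
    exact congrArg _ rfl
  · intro i k _ _ hk2 _
    show S.bracket (xb i) (((S.R x) ^ (k-1)) x) = 0
    exact hann (k-1) (by omega) (xb i)
  · intro j hj _
    show S.bracket (((S.R x) ^ (j-1)) (w : L)) (xb 1) = ((S.R x) ^ (j+1-1)) (w : L)
    rw [hxb1, hbr (w : L) (j-1), show j - 1 + 1 = j + 1 - 1 from by omega]
  · show S.bracket (((S.R x) ^ (m-1)) (w : L)) (xb 1) = 0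
    rw [hxb1, hbr (w : L) (m-1), show m - 1 + 1 = m from by omega, hRnw m, hgm]
    exact congrArg _ rfl
  · intro j k _ _ hk2 _
    show S.bracket (yb j) (((S.R x) ^ (k-1)) x) = 0
    exact hann (k-1) (by omega) (yb j)
end

section
/- Let L ∈ ZF^{n,m} be a zero-filiform Leibniz superalgebra of nilindex n+m with an adapted basis {x₁,…,x_n,y₁,…,y_m} whose generators are x₁ and y₁, and write [y_i,y₁] = Σ_{j=2}^n β_{i,j} x_j for 1 ≤ i ≤ m. Then for all 1 ≤ i,j ≤ m one has [y_i,y_j] = Σ_{s=0}^{min{i+j−1,m}−i} (−1)^s C(j−1,s) Σ_{t=2}^{n−j+s+1} β_{i+s,t} x_{t+j−s−1}, where C(j−1,s) denotes the binomial coefficient. -/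
section AuxLemmas

lemma aux_shift {M : Type*} [AddCommGroup M] [Module ℂ M] (f : M →ₗ[ℂ] M) (x : ℕ → M)
    (n j s : ℕ) (hs : s + 1 ≤ j) (c : ℕ → ℂ)
    (hf : ∀ k, 2 ≤ k → k ≤ n - 1 → f (x k) = x (k + 1)) (hfn : f (x n) = 0) :
    f (∑ t ∈ Finset.Icc 2 (n + s + 1 - j), c t • x (t + j - s - 1)) =
      ∑ t ∈ Finset.Icc 2 (n + s - j), c t • x (t + j - s) := by
  rw [map_sum]
  rcases le_or_gt (j + 1) (n + s) with h | h
  · have he : n + s + 1 - j = (n + s - j) + 1 := by omega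
    rw [he, Finset.sum_Icc_succ_top (by omega)]
    rw [map_smul]
    have h2 : n + s - j + 1 + j - s - 1 = n := by omega
    rw [h2, hfn, smul_zero, add_zero]
    refine Finset.sum_congr rfl fun t ht => ?_
    rw [Finset.mem_Icc] at ht
    rw [map_smul, hf (t + j - s - 1) (by omega) (by omega)]
    rw [show t + j - s - 1 + 1 = t + j - s from by omega]
  · have e1 : Finset.Icc 2 (n + s + 1 - j) = ∅ := Finset.Icc_eq_empty (by omega)
    have e2 : Finset.Icc 2 (n + s - j) = ∅ := Finset.Icc_eq_empty (by omega)
    rw [e1, e2]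
    simp

lemma pascal_sum {M : Type*} [AddCommGroup M] [Module ℂ M] (j K : ℕ) (g : ℕ → M) :
    ∑ s ∈ Finset.range (K + 1), ((-1 : ℂ) ^ s * ((j + 1).choose s : ℂ)) • g s =
      ∑ s ∈ Finset.range (K + 1), ((-1 : ℂ) ^ s * (j.choose s : ℂ)) • g s -
        ∑ s ∈ Finset.range K, ((-1 : ℂ) ^ s * (j.choose s : ℂ)) • g (s + 1) := by
  induction K with
  | zero => simp
  | succ K ih =>
    rw [Finset.sum_range_succ, ih,
      Finset.sum_range_succ (fun s => ((-1 : ℂ) ^ s * (j.choose s : ℂ)) • g s) (K + 1),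
      Finset.sum_range_succ (fun s => ((-1 : ℂ) ^ s * (j.choose s : ℂ)) • g s) K,
      Finset.sum_range_succ (fun s => ((-1 : ℂ) ^ s * (j.choose s : ℂ)) • g (s + 1)) K,
      Nat.choose_succ_succ j K]
    simp only [Nat.succ_eq_add_one]
    push_cast
    simp only [pow_succ]
    module

end AuxLemmas

open LeibnizSuper in
/-- Lemma 3.1: in a zero-filiform Leibniz superalgebra of nilindex `n+m` with adapted
basis and generators `x₁, y₁`, writing `[y_i,y₁] = Σ_{j=2}^n β_{i,j} x_j`, one has
`[y_i,y_j] = Σ_{s=0}^{min(i+j−1,m)−i} (−1)^s C(j−1,s) Σ_{t=2}^{n−j+s+1} β_{i+s,t} x_{t+j−s−1}`. -/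
theorem bracket_yy_formula {L : Type*} [AddCommGroup L] [Module ℂ L]
    [FiniteDimensional ℂ L] (S : LeibnizSuper L) (n m : ℕ)
    (hzf : S.ZeroFiliform n m) (hnil : S.HasNilindex (n + m))
    (x y : ℕ → L) (hadapt : S.IsAdaptedPair n m x y)
    (hgen : S.Generates {x 1, y 1})
    (β : ℕ → ℕ → ℂ)
    (hβ : ∀ i, 1 ≤ i → i ≤ m →
      S.bracket (y i) (y 1) = ∑ j ∈ Finset.Icc 2 n, β i j • x j) :
    ∀ i j, 1 ≤ i → i ≤ m → 1 ≤ j → j ≤ m →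
      S.bracket (y i) (y j) =
        ∑ s ∈ Finset.range (min (i + j - 1) m - i + 1),
          ∑ t ∈ Finset.Icc 2 (n + s + 1 - j),
            ((-1 : ℂ) ^ s * (Nat.choose (j - 1) s : ℂ) * β (i + s) t) •
              x (t + j - s - 1) := by
  obtain ⟨hn0, hm0, hcs⟩ := hzf
  obtain ⟨⟨x0, hx0L, hx0n, hJn⟩, -, ⟨x1', hx1L, hx1n, hJm⟩, -⟩ := hcs
  obtain ⟨-, hposn, -⟩ := hJn
  obtain ⟨-, hposm, -⟩ := hJm
  have hn : 0 < n := hposn n (by simp)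
  have hm : 0 < m := hposm m (by simp)
  obtain ⟨hxL, hyL, -, -, hxx, hxn, -, hyx, hym, -⟩ := hadapt
  have hf1 : ∀ k, 2 ≤ k → k ≤ n - 1 → (S.R (x 1)) (x k) = x (k + 1) :=
    fun k h2 hk => hxx k (by omega) hk
  have hfn : (S.R (x 1)) (x n) = 0 := hxn
  have hkey : ∀ v : L, S.bracket v (x 1) = (S.R (x 1)) v := fun _ => rfl
  suffices H : ∀ j, 1 ≤ j → j ≤ m → ∀ i, 1 ≤ i → i ≤ m →
      S.bracket (y i) (y j) =
        ∑ s ∈ Finset.range (min (i + j - 1) m - i + 1),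
          ∑ t ∈ Finset.Icc 2 (n + s + 1 - j),
            ((-1 : ℂ) ^ s * (Nat.choose (j - 1) s : ℂ) * β (i + s) t) •
              x (t + j - s - 1) by
    intro i j hi1 him hj1 hjm
    exact H j hj1 hjm i hi1 him
  intro j hj
  induction j, hj using Nat.le_induction with
  | base =>
    intro h1m i hi1 him
    rw [hβ i hi1 him]
    rw [show min (i + 1 - 1) m - i + 1 = 1 from by omega, Finset.sum_range_one]
    refine Finset.sum_congr (by norm_num) fun t ht => ?_
    simp
  | succ j hj ih =>
    intro hj1m i hi1 him
    have hjm : j ≤ m := by omega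
    have hyL1 : y j ∈ S.L1 := hyL j hj hjm
    have hxL1 : x 1 ∈ S.L0 := hxL 1 le_rfl hn
    rw [← hyx j hj (by omega), S.leib10 (y i) (y j) hyL1 (x 1) hxL1, ih hjm i hi1 him]
    have hA : S.bracket (∑ s ∈ Finset.range (min (i + j - 1) m - i + 1),
          ∑ t ∈ Finset.Icc 2 (n + s + 1 - j),
            ((-1 : ℂ) ^ s * (Nat.choose (j - 1) s : ℂ) * β (i + s) t) •
              x (t + j - s - 1)) (x 1) =
        ∑ s ∈ Finset.range (min (i + j - 1) m - i + 1),
          ((-1 : ℂ) ^ s * (Nat.choose (j - 1) s : ℂ)) •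
            ∑ t ∈ Finset.Icc 2 (n + s - j), β (i + s) t • x (t + j - s) := by
      rw [hkey, map_sum]
      refine Finset.sum_congr rfl fun s hs => ?_
      rw [Finset.mem_range] at hs
      rw [aux_shift (S.R (x 1)) x n j s (by omega) _ hf1 hfn, Finset.smul_sum]
      exact Finset.sum_congr rfl fun t _ => mul_smul _ _ _
    have hB : ∑ s ∈ Finset.range (min (i + j - 1) m - i + 1),
          ((-1 : ℂ) ^ s * (Nat.choose (j - 1) s : ℂ)) •
            ∑ t ∈ Finset.Icc 2 (n + s - j), β (i + s) t • x (t + j - s) =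
        ∑ s ∈ Finset.range (min (i + j) m - i + 1),
          ((-1 : ℂ) ^ s * (Nat.choose (j - 1) s : ℂ)) •
            ∑ t ∈ Finset.Icc 2 (n + s - j), β (i + s) t • x (t + j - s) := by
      refine Finset.sum_subset (Finset.range_subset_range.mpr (by omega)) fun s hs hns => ?_
      rw [Finset.mem_range] at hs hns
      have hlt : j - 1 < s := by omega
      simp [Nat.choose_eq_zero_of_lt hlt]
    have hC : ∑ s ∈ Finset.range (min (i + (j + 1) - 1) m - i + 1),
          ∑ t ∈ Finset.Icc 2 (n + s + 1 - (j + 1)),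
            ((-1 : ℂ) ^ s * (Nat.choose (j + 1 - 1) s : ℂ) * β (i + s) t) •
              x (t + (j + 1) - s - 1) =
        ∑ s ∈ Finset.range (min (i + j) m - i + 1),
          ((-1 : ℂ) ^ s * (Nat.choose j s : ℂ)) •
            ∑ t ∈ Finset.Icc 2 (n + s - j), β (i + s) t • x (t + j - s) := by
      rw [show min (i + (j + 1) - 1) m - i + 1 = min (i + j) m - i + 1 from by omega]
      refine Finset.sum_congr rfl fun s hs => ?_
      rw [Finset.smul_sum, show n + s + 1 - (j + 1) = n + s - j from by omega]
      refine Finset.sum_congr rfl fun t ht => ?_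
      rw [show t + (j + 1) - s - 1 = t + j - s from by omega,
        show j + 1 - 1 = j from by omega, mul_smul]
    by_cases hieq : i = m
    · subst hieq
      rw [hym, map_zero, LinearMap.zero_apply, sub_zero, hA, hB, hC]
      rw [show min (i + j) i - i + 1 = 1 from by omega, Finset.sum_range_one,
        Finset.sum_range_one]
      simp
    · have hi1m : i + 1 ≤ m := by omega
      rw [hyx i hi1 (by omega), ih hjm (i + 1) (by omega) hi1m, hA, hB, hC]
      have hD : ∑ s ∈ Finset.range (min (i + 1 + j - 1) m - (i + 1) + 1),
            ∑ t ∈ Finset.Icc 2 (n + s + 1 - j),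
              ((-1 : ℂ) ^ s * (Nat.choose (j - 1) s : ℂ) * β (i + 1 + s) t) •
                x (t + j - s - 1) =
          ∑ s ∈ Finset.range (min (i + j) m - i),
            ((-1 : ℂ) ^ s * (Nat.choose (j - 1) s : ℂ)) •
              ∑ t ∈ Finset.Icc 2 (n + (s + 1) - j), β (i + (s + 1)) t • x (t + j - (s + 1)) := by
        rw [show min (i + 1 + j - 1) m - (i + 1) + 1 = min (i + j) m - i from by omega]
        refine Finset.sum_congr rfl fun s hs => ?_
        rw [Finset.smul_sum, show n + (s + 1) - j = n + s + 1 - j from by omega]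
        refine Finset.sum_congr rfl fun t ht => ?_
        rw [show i + (s + 1) = i + 1 + s from by omega,
          show t + j - (s + 1) = t + j - s - 1 from by omega, mul_smul]
      rw [hD]
      have hp := pascal_sum (j - 1) (min (i + j) m - i)
        (fun s => ∑ t ∈ Finset.Icc 2 (n + s - j), β (i + s) t • x (t + j - s))
      rw [show j - 1 + 1 = j from by omega] at hp
      exact hp.symm
end

section
/- Let L ∈ ZF^{2,m} (m ≥ 3) be a zero-filiform Leibniz superalgebra of nilindex m+2 with an adapted basis {x₁,x₂,y₁,…,y_m} whose generators are x₁ and y₁, and write [y_i,y₁] = β_{i,2} x₂ for 1 ≤ i ≤ m. Then [y_i,y_j] = (−1)^{j−1} β_{i+j−1,2} x₂ whenever 2 ≤ i+j ≤ m+1, and [y_i,y_j] = 0 whenever m+2 ≤ i+j ≤ 2m. -/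
open LeibnizSuper in
/-- Formula (2): in `L ∈ ZF^{2,m}` (`m ≥ 3`) of nilindex `m+2` with adapted basis and
generators `x₁, y₁`, writing `[y_i,y₁] = β_{i,2} x₂`, one has
`[y_i,y_j] = (−1)^{j−1} β_{i+j−1,2} x₂` for `2 ≤ i+j ≤ m+1` and `[y_i,y_j] = 0`
for `m+2 ≤ i+j ≤ 2m`. -/
theorem bracket_yy_formula_n2 {L : Type*} [AddCommGroup L] [Module ℂ L]
    [FiniteDimensional ℂ L] (S : LeibnizSuper L) (m : ℕ) (hm : 3 ≤ m)
    (hzf : S.ZeroFiliform 2 m) (hnil : S.HasNilindex (m + 2))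
    (x y : ℕ → L) (hadapt : S.IsAdaptedPair 2 m x y)
    (hgen : S.Generates {x 1, y 1})
    (β : ℕ → ℂ) (hβ : ∀ i, 1 ≤ i → i ≤ m → S.bracket (y i) (y 1) = β i • x 2) :
    (∀ i j, 1 ≤ i → i ≤ m → 1 ≤ j → j ≤ m → i + j ≤ m + 1 →
      S.bracket (y i) (y j) = ((-1 : ℂ) ^ (j - 1) * β (i + j - 1)) • x 2) ∧
    (∀ i j, 1 ≤ i → i ≤ m → 1 ≤ j → j ≤ m → m + 2 ≤ i + j →
      S.bracket (y i) (y j) = 0) := by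
  obtain ⟨hx0, hy1mem, _, _, _, hx21, _, hyx, hym, _⟩ := hadapt
  have hx1 : x 1 ∈ S.L0 := hx0 1 le_rfl (by omega)
  have key : ∀ j, 1 ≤ j → j ≤ m → ∀ i, 1 ≤ i → i ≤ m →
      S.bracket (y i) (y j) =
        if i + j ≤ m + 1 then ((-1 : ℂ) ^ (j - 1) * β (i + j - 1)) • x 2 else 0 := by
    intro j hj1
    induction j, hj1 using Nat.le_induction with
    | base =>
      intro _ i hi1 him
      rw [if_pos (by omega)]
      simpa using hβ i hi1 him
    | succ j hj ih =>
      intro hjm i hi1 him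
      obtain ⟨k, rfl⟩ : ∃ k, j = k + 1 := ⟨j - 1, by omega⟩
      have hyj : y (k + 1) ∈ S.L1 := hy1mem (k + 1) hj (by omega)
      have hstep : S.bracket (y i) (y (k + 1 + 1)) =
          S.bracket (S.bracket (y i) (y (k + 1))) (x 1) -
            S.bracket (S.bracket (y i) (x 1)) (y (k + 1)) := by
        rw [← hyx (k + 1) hj (by omega)]
        exact S.leib10 (y i) (y (k + 1)) hyj (x 1) hx1
      have hIH := ih (by omega)
      have h1 : S.bracket (S.bracket (y i) (y (k + 1))) (x 1) = 0 := by
        rw [hIH i hi1 him]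
        split
        · rw [map_smul, LinearMap.smul_apply, hx21, smul_zero]
        · simp
      by_cases hcase : i = m
      · subst hcase
        rw [hstep, h1, hym, if_neg (by omega)]
        simp
      · have hi' : i ≤ m - 1 := by omega
        rw [hstep, h1, hyx i hi1 hi', hIH (i + 1) (by omega) (by omega)]
        by_cases hc : i + (k + 1) ≤ m
        · rw [if_pos (by omega), if_pos (by omega), zero_sub, ← neg_smul]
          congr 1
          have e1 : i + 1 + (k + 1) - 1 = i + k + 1 := by omega
          have e2 : i + (k + 1 + 1) - 1 = i + k + 1 := by omega
          simp only [e1, e2, Nat.add_sub_cancel, pow_succ]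
          ring
        · rw [if_neg (by omega), if_neg (by omega)]
          simp
  constructor
  · intro i j hi1 him hj1 hjm hsum
    rw [key j hj1 hjm i hi1 him, if_pos hsum]
  · intro i j hi1 him hj1 hjm hsum
    rw [key j hj1 hjm i hi1 him, if_neg (by omega)]
end

section
/- Let L ∈ ZF^{2,m} (m ≥ 3) be a zero-filiform Leibniz superalgebra of nilindex m+2 with an adapted basis {x₁,x₂,y₁,…,y_m} whose generators are x₁ and y₁, and write [y_m,y₁] = β_{m,2} x₂. Then β_{m,2} ≠ 0. -/
section AuxDev

open LeibnizSuper Module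

variable {L : Type*} [AddCommGroup L] [Module ℂ L]

/-- Working context for the contradiction argument: all the data extracted from the
hypotheses of the main theorem, together with the assumption `[y_m, y_1] = 0`. -/
structure ZFC (L : Type*) [AddCommGroup L] [Module ℂ L] where
  S : LeibnizSuper L
  m : ℕ
  hm : 3 ≤ m
  x : ℕ → L
  y : ℕ → L
  indep : LinearIndependent ℂ
    (Sum.elim (fun i : Fin 2 => x ((i : ℕ) + 1)) (fun j : Fin m => y ((j : ℕ) + 1)))
  spanT : Submodule.span ℂ (Set.range
    (Sum.elim (fun i : Fin 2 => x ((i : ℕ) + 1)) (fun j : Fin m => y ((j : ℕ) + 1)))) = ⊤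
  hx0 : ∀ i, 1 ≤ i → i ≤ 2 → x i ∈ S.L0
  hy1 : ∀ j, 1 ≤ j → j ≤ m → y j ∈ S.L1
  bx11 : S.bracket (x 1) (x 1) = x 2
  bx21 : S.bracket (x 2) (x 1) = 0
  bx12 : S.bracket (x 1) (x 2) = 0
  bx22 : S.bracket (x 2) (x 2) = 0
  byx1 : ∀ j, 1 ≤ j → j ≤ m - 1 → S.bracket (y j) (x 1) = y (j + 1)
  bym : S.bracket (y m) (x 1) = 0
  byx2 : ∀ j, 1 ≤ j → j ≤ m → S.bracket (y j) (x 2) = 0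
  hL0 : S.L0 ≤ Submodule.span ℂ (Set.range (fun i : Fin 2 => x ((i : ℕ) + 1)))
  hL1 : S.L1 ≤ Submodule.span ℂ (Set.range (fun j : Fin m => y ((j : ℕ) + 1)))
  hnil1 : S.term (m + 1) = ⊥
  hnil2 : S.term m ≠ ⊥
  hb : S.bracket (y m) (y 1) = 0

namespace ZFC

variable (C : ZFC L)

/-- The adapted basis. -/
noncomputable def bas : Basis (Fin 2 ⊕ Fin C.m) ℂ L := Basis.mk C.indep C.spanT.ge

lemma bas_inl (i : Fin 2) : C.bas (Sum.inl i) = C.x ((i : ℕ) + 1) := by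
  simp [bas, Basis.mk_apply]

lemma bas_inr (b : Fin C.m) : C.bas (Sum.inr b) = C.y ((b : ℕ) + 1) := by
  simp [bas, Basis.mk_apply]

/-- coefficient of `x 1`. -/
noncomputable def p1 : L →ₗ[ℂ] ℂ := C.bas.coord (Sum.inl 0)

/-- coefficient of `x 2`. -/
noncomputable def p2 : L →ₗ[ℂ] ℂ := C.bas.coord (Sum.inl 1)

/-- coefficient of `y p` (1-based); junk value `0` out of range. -/
noncomputable def dl (p : ℕ) : L →ₗ[ℂ] ℂ :=
  if h : 1 ≤ p ∧ p ≤ C.m then C.bas.coord (Sum.inr ⟨p - 1, by omega⟩) else 0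

lemma coord_eval (i j : Fin 2 ⊕ Fin C.m) :
    C.bas.coord i (C.bas j) = if j = i then 1 else 0 := by
  rw [Basis.coord_apply, Basis.repr_self, Finsupp.single_apply]

lemma dl_coord (b : Fin C.m) : C.dl ((b : ℕ) + 1) = C.bas.coord (Sum.inr b) := by
  have h : 1 ≤ (b : ℕ) + 1 ∧ (b : ℕ) + 1 ≤ C.m := ⟨Nat.le_add_left 1 _, b.isLt⟩
  rw [dl, dif_pos h]
  have hb : (⟨(b : ℕ) + 1 - 1, by omega⟩ : Fin C.m) = b := Fin.ext (by simp)
  rw [hb]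

lemma y_bas {q : ℕ} (hq1 : 1 ≤ q) (hqm : q ≤ C.m) :
    C.y q = C.bas (Sum.inr ⟨q - 1, by omega⟩) := by
  rw [C.bas_inr]
  congr 1
  show q = q - 1 + 1
  omega

lemma x1_bas : C.x 1 = C.bas (Sum.inl 0) := by rw [C.bas_inl]; norm_num

lemma x2_bas : C.x 2 = C.bas (Sum.inl 1) := by rw [C.bas_inl]; norm_num

lemma dl_y {p q : ℕ} (hp1 : 1 ≤ p) (hpm : p ≤ C.m) (hq1 : 1 ≤ q) (hqm : q ≤ C.m) :
    C.dl p (C.y q) = if p = q then 1 else 0 := by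
  rw [dl, dif_pos ⟨hp1, hpm⟩, C.y_bas hq1 hqm, coord_eval]
  by_cases h : p = q
  · subst h; simp
  · rw [if_neg (by simp only [Sum.inr.injEq, Fin.mk.injEq]; omega), if_neg h]

lemma dl_x1 (p : ℕ) : C.dl p (C.x 1) = 0 := by
  by_cases h : 1 ≤ p ∧ p ≤ C.m
  · rw [dl, dif_pos h, C.x1_bas, coord_eval, if_neg (by simp)]
  · rw [dl, dif_neg h]; rfl

lemma dl_x2 (p : ℕ) : C.dl p (C.x 2) = 0 := by
  by_cases h : 1 ≤ p ∧ p ≤ C.m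
  · rw [dl, dif_pos h, C.x2_bas, coord_eval, if_neg (by simp)]
  · rw [dl, dif_neg h]; rfl

lemma p1_x1 : C.p1 (C.x 1) = 1 := by
  rw [p1, C.x1_bas, coord_eval, if_pos rfl]

lemma p1_x2 : C.p1 (C.x 2) = 0 := by
  rw [p1, C.x2_bas, coord_eval, if_neg (by simp)]

lemma p2_x1 : C.p2 (C.x 1) = 0 := by
  rw [p2, C.x1_bas, coord_eval, if_neg (by simp)]

lemma p2_x2 : C.p2 (C.x 2) = 1 := by
  rw [p2, C.x2_bas, coord_eval, if_pos rfl]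

lemma p1_y {q : ℕ} (hq1 : 1 ≤ q) (hqm : q ≤ C.m) : C.p1 (C.y q) = 0 := by
  rw [p1, C.y_bas hq1 hqm, coord_eval, if_neg (by simp)]

lemma p2_y {q : ℕ} (hq1 : 1 ≤ q) (hqm : q ≤ C.m) : C.p2 (C.y q) = 0 := by
  rw [p2, C.y_bas hq1 hqm, coord_eval, if_neg (by simp)]

/-- Master expansion of a vector in the adapted basis. -/
lemma master (v : L) :
    v = C.p1 v • C.x 1 + C.p2 v • C.x 2 + ∑ b : Fin C.m, C.dl ((b : ℕ) + 1) v • C.y ((b : ℕ) + 1) := by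
  have h := C.bas.sum_repr v
  rw [Fintype.sum_sum_type, Fin.sum_univ_two] at h
  conv_lhs => rw [← h]
  congr 1
  · congr 1
    · rw [p1, Basis.coord_apply, ← C.x1_bas]
    · rw [p2, Basis.coord_apply, ← C.x2_bas]
  · exact Finset.sum_congr rfl fun b _ => by rw [dl_coord, Basis.coord_apply, C.bas_inr]


/-- Master expansion, ℕ-indexed. -/
lemma masterI (v : L) :
    v = C.p1 v • C.x 1 + C.p2 v • C.x 2 + ∑ p ∈ Finset.Icc 1 C.m, C.dl p v • C.y p := by
  have hm0 : 0 < C.m := by have := C.hm; omega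
  have hsum : ∑ b : Fin C.m, C.dl ((b : ℕ) + 1) v • C.y ((b : ℕ) + 1)
      = ∑ p ∈ Finset.Icc 1 C.m, C.dl p v • C.y p := by
    refine Finset.sum_nbij' (i := fun b : Fin C.m => (b : ℕ) + 1)
      (j := fun p => (⟨(p - 1) % C.m, Nat.mod_lt _ hm0⟩ : Fin C.m)) ?_ ?_ ?_ ?_ ?_
    · intro b _
      exact Finset.mem_Icc.mpr ⟨Nat.le_add_left 1 _, b.isLt⟩
    · intro p _
      exact Finset.mem_univ _
    · intro b _
      exact Fin.ext (by simp [Nat.mod_eq_of_lt b.isLt])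
    · intro p hp
      obtain ⟨h1, h2⟩ := Finset.mem_Icc.mp hp
      simp only []
      rw [Nat.mod_eq_of_lt (by omega)]
      omega
    · intro b _
      rfl
  rw [← hsum]
  exact C.master v

lemma brackR (v u : L) :
    C.S.bracket v u = C.p1 v • C.S.bracket (C.x 1) u + C.p2 v • C.S.bracket (C.x 2) u
      + ∑ p ∈ Finset.Icc 1 C.m, C.dl p v • C.S.bracket (C.y p) u := by
  conv_lhs => rw [C.masterI v]
  simp only [map_add, map_smul, map_sum, LinearMap.add_apply, LinearMap.smul_apply,
    LinearMap.sum_apply]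

lemma brackL (u v : L) :
    C.S.bracket u v = C.p1 v • C.S.bracket u (C.x 1) + C.p2 v • C.S.bracket u (C.x 2)
      + ∑ p ∈ Finset.Icc 1 C.m, C.dl p v • C.S.bracket u (C.y p) := by
  conv_lhs => rw [C.masterI v]
  simp only [map_add, map_smul, map_sum]

lemma dl_L0 (p : ℕ) : C.S.L0 ≤ LinearMap.ker (C.dl p) := by
  refine C.hL0.trans (Submodule.span_le.2 ?_)
  rintro _ ⟨i, rfl⟩
  fin_cases i
  · simpa [LinearMap.mem_ker] using C.dl_x1 p
  · simpa [LinearMap.mem_ker] using C.dl_x2 p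

lemma p1_L1 : C.S.L1 ≤ LinearMap.ker C.p1 := by
  refine C.hL1.trans (Submodule.span_le.2 ?_)
  rintro _ ⟨j, rfl⟩
  simpa [LinearMap.mem_ker] using C.p1_y (q := (j : ℕ) + 1) (Nat.le_add_left 1 _) j.isLt

lemma p2_L1 : C.S.L1 ≤ LinearMap.ker C.p2 := by
  refine C.hL1.trans (Submodule.span_le.2 ?_)
  rintro _ ⟨j, rfl⟩
  simpa [LinearMap.mem_ker] using C.p2_y (q := (j : ℕ) + 1) (Nat.le_add_left 1 _) j.isLt

/-- Expansion of an even vector. -/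
lemma L0ex {v : L} (hv : v ∈ C.S.L0) : v = C.p1 v • C.x 1 + C.p2 v • C.x 2 := by
  conv_lhs => rw [C.masterI v]
  rw [Finset.sum_eq_zero fun p _ => by rw [C.dl_L0 p hv, zero_smul], add_zero]

lemma hx1L0 : C.x 1 ∈ C.S.L0 := C.hx0 1 le_rfl one_le_two
lemma hx2L0 : C.x 2 ∈ C.S.L0 := C.hx0 2 one_le_two le_rfl

/-- `[v, x₂] = 0` for every `v`. -/
lemma br_x2 (v : L) : C.S.bracket v (C.x 2) = 0 := by
  rw [C.brackR v (C.x 2), C.bx12, C.bx22]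
  rw [Finset.sum_eq_zero fun p hp => by
    rw [C.byx2 p (Finset.mem_Icc.mp hp).1 (Finset.mem_Icc.mp hp).2, smul_zero]]
  simp

noncomputable def cc (j : ℕ) : L := C.S.bracket (C.x 1) (C.y j)
noncomputable def dd (j : ℕ) : L := C.S.bracket (C.x 2) (C.y j)
noncomputable def Mf (i j : ℕ) : L := C.S.bracket (C.y i) (C.y j)
noncomputable def Af (i : ℕ) : ℂ := C.p1 (C.Mf i 1)
noncomputable def Bf (i : ℕ) : ℂ := C.p2 (C.Mf i 1)

lemma cc_def (j : ℕ) : C.S.bracket (C.x 1) (C.y j) = C.cc j := rfl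
lemma dd_def (j : ℕ) : C.S.bracket (C.x 2) (C.y j) = C.dd j := rfl
lemma Mf_def (i j : ℕ) : C.S.bracket (C.y i) (C.y j) = C.Mf i j := rfl

lemma cc_mem {j : ℕ} (h1 : 1 ≤ j) (h2 : j ≤ C.m) : C.cc j ∈ C.S.L1 :=
  C.S.g01 _ C.hx1L0 _ (C.hy1 j h1 h2)

lemma dd_mem {j : ℕ} (h1 : 1 ≤ j) (h2 : j ≤ C.m) : C.dd j ∈ C.S.L1 :=
  C.S.g01 _ C.hx2L0 _ (C.hy1 j h1 h2)

lemma Mf_mem {i j : ℕ} (hi1 : 1 ≤ i) (hi2 : i ≤ C.m) (hj1 : 1 ≤ j) (hj2 : j ≤ C.m) :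
    C.Mf i j ∈ C.S.L0 :=
  C.S.g11 _ (C.hy1 i hi1 hi2) _ (C.hy1 j hj1 hj2)

lemma p1_cc {j : ℕ} (h1 : 1 ≤ j) (h2 : j ≤ C.m) : C.p1 (C.cc j) = 0 :=
  C.p1_L1 (C.cc_mem h1 h2)
lemma p2_cc {j : ℕ} (h1 : 1 ≤ j) (h2 : j ≤ C.m) : C.p2 (C.cc j) = 0 :=
  C.p2_L1 (C.cc_mem h1 h2)
lemma p1_dd {j : ℕ} (h1 : 1 ≤ j) (h2 : j ≤ C.m) : C.p1 (C.dd j) = 0 :=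
  C.p1_L1 (C.dd_mem h1 h2)
lemma p2_dd {j : ℕ} (h1 : 1 ≤ j) (h2 : j ≤ C.m) : C.p2 (C.dd j) = 0 :=
  C.p2_L1 (C.dd_mem h1 h2)
lemma dl_Mf {i j : ℕ} (hi1 : 1 ≤ i) (hi2 : i ≤ C.m) (hj1 : 1 ≤ j) (hj2 : j ≤ C.m) (p : ℕ) :
    C.dl p (C.Mf i j) = 0 :=
  C.dl_L0 p (C.Mf_mem hi1 hi2 hj1 hj2)

/-- `[v, x₁] = π₁(v) x₂` for even `v`. -/
lemma brL0_x1 {v : L} (hv : v ∈ C.S.L0) :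
    C.S.bracket v (C.x 1) = C.p1 v • C.x 2 := by
  conv_lhs => rw [C.L0ex hv]
  rw [map_add, LinearMap.add_apply, map_smul, map_smul, LinearMap.smul_apply,
    LinearMap.smul_apply, C.bx11, C.bx21, smul_zero, add_zero]

/-- `[v, y_k] = π₁(v) c_k + π₂(v) d_k` for even `v`. -/
lemma brL0_y {v : L} (hv : v ∈ C.S.L0) (k : ℕ) :
    C.S.bracket v (C.y k) = C.p1 v • C.cc k + C.p2 v • C.dd k := by
  conv_lhs => rw [C.L0ex hv]
  rw [map_add, LinearMap.add_apply, map_smul, map_smul, LinearMap.smul_apply,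
    LinearMap.smul_apply]
  rfl

/-- `[y_i, v] = π₁(v) y_{i+1}` for even `v`, `i ≤ m-1`. -/
lemma br_y_L0 {v : L} (hv : v ∈ C.S.L0) {i : ℕ} (hi1 : 1 ≤ i) (hi2 : i ≤ C.m - 1) :
    C.S.bracket (C.y i) v = C.p1 v • C.y (i + 1) := by
  rw [C.brackL (C.y i) v, C.byx1 i hi1 hi2, C.byx2 i hi1 (by have := C.hm; omega)]
  rw [Finset.sum_eq_zero fun p _ => by rw [C.dl_L0 p hv, zero_smul]]
  simp

/-- `[y_m, v] = 0` for even `v`. -/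
lemma br_ym_L0 {v : L} (hv : v ∈ C.S.L0) : C.S.bracket (C.y C.m) v = 0 := by
  rw [C.brackL (C.y C.m) v, C.bym, C.byx2 C.m (by have := C.hm; omega) le_rfl]
  rw [Finset.sum_eq_zero fun p _ => by rw [C.dl_L0 p hv, zero_smul]]
  simp

lemma dl_shift {q : ℕ} (hq1 : 1 ≤ q) (hqm : q ≤ C.m) {p : ℕ} (hp2 : 2 ≤ p) (hpm : p ≤ C.m) :
    C.dl p (C.S.bracket (C.y q) (C.x 1)) = if p = q + 1 then 1 else 0 := by
  by_cases hq' : q ≤ C.m - 1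
  · rw [C.byx1 q hq1 hq', C.dl_y (by omega) hpm (by omega) (by omega)]
  · have hqm' : q = C.m := by omega
    rw [hqm', C.bym, map_zero, if_neg (by omega)]

lemma dl_R {p : ℕ} (hp2 : 2 ≤ p) (hpm : p ≤ C.m) (v : L) :
    C.dl p (C.S.bracket v (C.x 1)) = C.dl (p - 1) v := by
  rw [C.brackR v (C.x 1), C.bx11, C.bx21]
  rw [map_add, map_add, map_smul, map_smul, map_sum, C.dl_x2 p, map_zero, smul_zero, smul_zero,
    zero_add, zero_add]
  rw [Finset.sum_congr rfl (fun q hq => by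
    rw [map_smul, smul_eq_mul,
      C.dl_shift (Finset.mem_Icc.mp hq).1 (Finset.mem_Icc.mp hq).2 hp2 hpm])]
  rw [Finset.sum_eq_single (p - 1)]
  · rw [if_pos (by omega), mul_one]
  · intro q _ hq
    rw [if_neg (by omega), mul_zero]
  · intro h
    exact absurd (Finset.mem_Icc.mpr ⟨by omega, by omega⟩) h

lemma dl1_R (v : L) : C.dl 1 (C.S.bracket v (C.x 1)) = 0 := by
  rw [C.brackR v (C.x 1), C.bx11, C.bx21]
  rw [map_add, map_add, map_smul, map_smul, map_sum, C.dl_x2 1, map_zero, smul_zero, smul_zero,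
    zero_add, zero_add]
  refine Finset.sum_eq_zero fun q hq => ?_
  obtain ⟨hq1, hq2⟩ := Finset.mem_Icc.mp hq
  rw [map_smul, smul_eq_mul]
  by_cases hq' : q ≤ C.m - 1
  · rw [C.byx1 q hq1 hq', C.dl_y le_rfl (by omega) (by omega) (by omega), if_neg (by omega),
      mul_zero]
  · have : q = C.m := by omega
    rw [this, C.bym, map_zero, mul_zero]

lemma p1_R (v : L) : C.p1 (C.S.bracket v (C.x 1)) = 0 := by
  rw [C.brackR v (C.x 1), C.bx11, C.bx21]
  rw [map_add, map_add, map_smul, map_smul, map_sum, C.p1_x2, map_zero, smul_zero, smul_zero,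
    zero_add, zero_add]
  refine Finset.sum_eq_zero fun q hq => ?_
  obtain ⟨hq1, hq2⟩ := Finset.mem_Icc.mp hq
  rw [map_smul, smul_eq_mul]
  by_cases hq' : q ≤ C.m - 1
  · rw [C.byx1 q hq1 hq', C.p1_y (by omega) (by omega), mul_zero]
  · have : q = C.m := by omega
    rw [this, C.bym, map_zero, mul_zero]

/- ### The Leibniz identities in adapted coordinates -/

lemma Ia {j : ℕ} (hj1 : 1 ≤ j) (hj2 : j ≤ C.m - 1) :
    C.cc (j + 1) = C.S.bracket (C.cc j) (C.x 1) - C.dd j := by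
  have h := C.S.leib10 (C.x 1) (C.y j) (C.hy1 j hj1 (by omega)) (C.x 1) C.hx1L0
  rw [C.byx1 j hj1 hj2, C.bx11] at h
  exact h

lemma Ib {j : ℕ} (hj1 : 1 ≤ j) (hj2 : j ≤ C.m - 1) :
    C.dd (j + 1) = C.S.bracket (C.dd j) (C.x 1) := by
  have h := C.S.leib10 (C.x 2) (C.y j) (C.hy1 j hj1 (by omega)) (C.x 1) C.hx1L0
  rw [C.byx1 j hj1 hj2, C.bx21] at h
  simpa [dd] using h

lemma Ic {j : ℕ} (hj1 : 1 ≤ j) (hj2 : j ≤ C.m) :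
    C.S.bracket (C.x 1) (C.cc j) = C.dd j - C.S.bracket (C.cc j) (C.x 1) := by
  have h := C.S.leib01 (C.x 1) (C.x 1) C.hx1L0 (C.y j) (C.hy1 j hj1 hj2)
  rw [C.bx11] at h
  exact h

lemma Id {j : ℕ} (hj1 : 1 ≤ j) (hj2 : j ≤ C.m) :
    C.S.bracket (C.x 1) (C.dd j) = 0 := by
  have h := C.S.leib01 (C.x 1) (C.x 2) C.hx2L0 (C.y j) (C.hy1 j hj1 hj2)
  rw [C.bx12] at h
  rw [show C.S.bracket (C.S.bracket (C.x 1) (C.y j)) (C.x 2) = 0 from C.br_x2 _] at h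
  simpa [dd] using h

lemma Ie {i : ℕ} (hi1 : 1 ≤ i) (hi2 : i ≤ C.m - 1) {j : ℕ} (hj1 : 1 ≤ j) (hj2 : j ≤ C.m - 1) :
    C.Mf i (j + 1) = C.p1 (C.Mf i j) • C.x 2 - C.Mf (i + 1) j := by
  have h := C.S.leib10 (C.y i) (C.y j) (C.hy1 j hj1 (by omega)) (C.x 1) C.hx1L0
  rw [C.byx1 j hj1 hj2, C.byx1 i hi1 hi2, C.Mf_def, C.Mf_def, C.Mf_def] at h
  rw [C.brL0_x1 (C.Mf_mem hi1 (by omega) hj1 (by omega))] at h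
  exact h

lemma If : ∀ j, 1 ≤ j → j ≤ C.m → C.Mf C.m j = 0 := by
  intro j
  induction j with
  | zero => omega
  | succ n ih =>
    intro _ hn
    by_cases hn1 : n = 0
    · subst hn1; exact C.hb
    · have h := C.S.leib10 (C.y C.m) (C.y n) (C.hy1 n (by omega) (by omega)) (C.x 1) C.hx1L0
      rw [C.byx1 n (by omega) (by omega), C.bym, C.Mf_def, C.Mf_def,
        ih (by omega) (by omega)] at h
      simpa using h

lemma Ig {i : ℕ} (hi1 : 1 ≤ i) (hi2 : i ≤ C.m - 1) {j : ℕ} (hj1 : 1 ≤ j) (hj2 : j ≤ C.m) :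
    C.S.bracket (C.y i) (C.cc j) = C.Mf (i + 1) j - C.p1 (C.Mf i j) • C.x 2 := by
  have h := C.S.leib01 (C.y i) (C.x 1) C.hx1L0 (C.y j) (C.hy1 j hj1 hj2)
  rw [C.byx1 i hi1 hi2, C.Mf_def, C.Mf_def, C.cc_def] at h
  rw [C.brL0_x1 (C.Mf_mem hi1 (by omega) hj1 hj2)] at h
  exact h

lemma Ih {i : ℕ} (hi1 : 1 ≤ i) (hi2 : i ≤ C.m - 1) {j : ℕ} (hj1 : 1 ≤ j) (hj2 : j ≤ C.m)
    {k : ℕ} (hk1 : 1 ≤ k) (hk2 : k ≤ C.m) :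
    C.p1 (C.Mf j k) • C.y (i + 1)
      = C.p1 (C.Mf i j) • C.cc k + C.p2 (C.Mf i j) • C.dd k
        + (C.p1 (C.Mf i k) • C.cc j + C.p2 (C.Mf i k) • C.dd j) := by
  have h := C.S.leib11 (C.y i) (C.y j) (C.hy1 j hj1 hj2) (C.y k) (C.hy1 k hk1 hk2)
  rw [C.Mf_def, C.Mf_def, C.Mf_def] at h
  rw [C.br_y_L0 (C.Mf_mem hj1 hj2 hk1 hk2) hi1 hi2] at h
  rw [C.brL0_y (C.Mf_mem hi1 (by omega) hj1 hj2) k,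
    C.brL0_y (C.Mf_mem hi1 (by omega) hk1 hk2) j] at h
  exact h

/- ### Central series basics -/

lemma mem_term_succ {t : ℕ} {v : L} (hv : v ∈ C.S.term t) (u : L) :
    C.S.bracket v u ∈ C.S.term (t + 1) :=
  Submodule.subset_span ⟨v, hv, u, Submodule.mem_top, rfl⟩

lemma term_succ_le {t : ℕ} {W : Submodule ℂ L}
    (h : ∀ v ∈ C.S.term t, ∀ u : L, C.S.bracket v u ∈ W) : C.S.term (t + 1) ≤ W := by
  show LeibnizSuper.bracketSpan _ _ _ ≤ W
  refine Submodule.span_le.2 ?_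
  rintro z ⟨a, ha, b, -, rfl⟩
  exact h a ha b

lemma x2_term1 : C.x 2 ∈ C.S.term 1 := by
  have h : C.x 1 ∈ C.S.term 0 := Submodule.mem_top
  simpa [C.bx11] using C.mem_term_succ h (C.x 1)

/-- Scaffold: low `y`-coordinates vanish along the central series. -/
lemma scaff_aux : ∀ (k : ℕ) (v : L), v ∈ C.S.term (C.m + 1 - k) →
    ∀ p, 1 ≤ p → p ≤ C.m - k → C.dl p v = 0 := by
  intro k
  induction k with
  | zero =>
    intro v hv p _ _
    have hv' : v ∈ (⊥ : Submodule ℂ L) := by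
      rw [← C.hnil1]
      simpa using hv
    simp [(Submodule.mem_bot ℂ).mp hv']
  | succ n ih =>
    intro v hv p hp1 hp2
    have hn : n < C.m := by omega
    have hbr : C.S.bracket v (C.x 1) ∈ C.S.term (C.m + 1 - n) := by
      have h2 := C.mem_term_succ hv (C.x 1)
      have harith : C.m + 1 - (n + 1) + 1 = C.m + 1 - n := by omega
      rwa [harith] at h2
    have h3 := ih _ hbr (p + 1) (by omega) (by omega)
    rw [C.dl_R (by omega) (by omega) v] at h3
    simpa using h3

/-- Scaffold in usable form: for `1 ≤ t ≤ m+1`, elements of `term t` have vanishing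
`y_p`-coordinates for `p < t`. -/
lemma scaff {t : ℕ} (ht : t ≤ C.m + 1) {v : L} (hv : v ∈ C.S.term t)
    {p : ℕ} (hp1 : 1 ≤ p) (hp2 : p < t) : C.dl p v = 0 :=
  C.scaff_aux (C.m + 1 - t) v (by rwa [show C.m + 1 - (C.m + 1 - t) = t by omega]) p hp1
    (by omega)

lemma dd_term2 {j : ℕ} (hj1 : 1 ≤ j) (hj2 : j ≤ C.m) : C.dd j ∈ C.S.term 2 :=
  C.mem_term_succ C.x2_term1 (C.y j)

lemma dl1_dd {j : ℕ} (hj1 : 1 ≤ j) (hj2 : j ≤ C.m) : C.dl 1 (C.dd j) = 0 :=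
  C.scaff (by omega) (C.dd_term2 hj1 hj2) le_rfl one_lt_two

/-- `[x₁, w]` expanded. -/
lemma br_x1_w (w : L) :
    C.S.bracket (C.x 1) w = C.p1 w • C.x 2 + ∑ p ∈ Finset.Icc 1 C.m, C.dl p w • C.cc p := by
  rw [C.brackL (C.x 1) w, C.bx11, C.bx12, smul_zero, add_zero]
  rfl

lemma dl1_cc_ge2 {j : ℕ} (h2 : 2 ≤ j) (hjm : j ≤ C.m) : C.dl 1 (C.cc j) = 0 := by
  obtain ⟨n, rfl⟩ : ∃ n, j = n + 1 := ⟨j - 1, by omega⟩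
  rw [C.Ia (by omega) (by omega), map_sub, C.dl1_R, C.dl1_dd (by omega) (by omega), sub_zero]

/-- Step 1: the `y₁`-coordinate of `c₁ = [x₁,y₁]` vanishes (its square is zero). -/
lemma dl1_cc1 : C.dl 1 (C.cc 1) = 0 := by
  have hm := C.hm
  have h := C.Ic (le_refl 1) (by omega)
  rw [C.br_x1_w (C.cc 1)] at h
  have h1 := congrArg (C.dl 1) h
  rw [map_add, map_smul, C.dl_x2 1, smul_zero, zero_add, map_sum, map_sub, C.dl1_R,
    C.dl1_dd (le_refl 1) (by omega), sub_zero] at h1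
  rw [Finset.sum_eq_single 1] at h1
  · rw [map_smul, smul_eq_mul] at h1
    exact mul_self_eq_zero.mp h1
  · intro q hq hq1
    obtain ⟨ha, hb⟩ := Finset.mem_Icc.mp hq
    rw [map_smul, smul_eq_mul, C.dl1_cc_ge2 (by omega) hb, mul_zero]
  · intro hnot
    exact absurd (Finset.mem_Icc.mpr ⟨le_rfl, by omega⟩) hnot

lemma dl1_cc {j : ℕ} (h1 : 1 ≤ j) (h2 : j ≤ C.m) : C.dl 1 (C.cc j) = 0 := by
  rcases eq_or_lt_of_le h1 with h | h
  · rw [← h]; exact C.dl1_cc1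
  · exact C.dl1_cc_ge2 h h2

lemma dl2_dd_ge2 {j : ℕ} (h2 : 2 ≤ j) (hjm : j ≤ C.m) : C.dl 2 (C.dd j) = 0 := by
  obtain ⟨n, rfl⟩ : ∃ n, j = n + 1 := ⟨j - 1, by omega⟩
  rw [C.Ib (by omega) (by omega), C.dl_R le_rfl (by have := C.hm; omega),
    C.dl1_dd (by omega) (by omega)]

lemma dl2_cc2 : C.dl 2 (C.cc 2) = - C.dl 2 (C.dd 1) := by
  have hm := C.hm
  rw [show (2 : ℕ) = 1 + 1 from rfl, C.Ia le_rfl (by omega), map_sub,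
    C.dl_R le_rfl (by omega), C.dl1_cc1]
  ring

lemma dl2_cc_ge3 {j : ℕ} (h3 : 3 ≤ j) (hjm : j ≤ C.m) : C.dl 2 (C.cc j) = 0 := by
  have hm := C.hm
  obtain ⟨n, rfl⟩ : ∃ n, j = n + 1 := ⟨j - 1, by omega⟩
  rw [C.Ia (by omega) (by omega), map_sub, C.dl_R le_rfl (by omega),
    C.dl1_cc (by omega) (by omega), C.dl2_dd_ge2 (by omega) (by omega), sub_zero]

/-- Step 2: the `y₂`-coordinate of `d₁ = [x₂,y₁]` vanishes (its square is zero). -/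
lemma dl2_dd1 : C.dl 2 (C.dd 1) = 0 := by
  have hm := C.hm
  have h := C.Id (le_refl 1) (by omega)
  rw [C.br_x1_w (C.dd 1)] at h
  have h1 := congrArg (C.dl 2) h
  rw [map_add, map_smul, C.dl_x2 2, smul_zero, zero_add, map_sum, map_zero] at h1
  rw [Finset.sum_eq_single 2] at h1
  · rw [map_smul, smul_eq_mul, C.dl2_cc2, mul_neg, neg_eq_zero] at h1
    exact mul_self_eq_zero.mp h1
  · intro q hq hq2
    obtain ⟨ha, hb⟩ := Finset.mem_Icc.mp hq
    rw [map_smul, smul_eq_mul]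
    rcases eq_or_lt_of_le ha with h' | h'
    · rw [← h', C.dl1_dd le_rfl (by omega), zero_mul]
    · rw [C.dl2_cc_ge3 (by omega) hb, mul_zero]
  · intro hnot
    exact absurd (Finset.mem_Icc.mpr ⟨by omega, by omega⟩) hnot

lemma dl2_dd {j : ℕ} (h1 : 1 ≤ j) (h2 : j ≤ C.m) : C.dl 2 (C.dd j) = 0 := by
  rcases eq_or_lt_of_le h1 with h | h
  · rw [← h]; exact C.dl2_dd1
  · exact C.dl2_dd_ge2 h h2

lemma Af_m : C.Af C.m = 0 := by
  show C.p1 (C.Mf C.m 1) = 0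
  rw [C.If 1 le_rfl (by have := C.hm; omega), map_zero]

lemma Af_def (i : ℕ) : C.p1 (C.Mf i 1) = C.Af i := rfl
lemma Bf_def (i : ℕ) : C.p2 (C.Mf i 1) = C.Bf i := rfl

/-- Structure of the `x₁`-coefficients of the products `[y_j, y_k]`. -/
lemma Astruct : ∀ k, 1 ≤ k → k ≤ C.m → ∀ j, 1 ≤ j → j ≤ C.m →
    C.p1 (C.Mf j k) = if j + k - 1 ≤ C.m then (-1 : ℂ) ^ (k - 1) * C.Af (j + k - 1) else 0 := by
  intro k
  induction k with
  | zero => omega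
  | succ n ih =>
    intro hk1 hk2 j hj1 hj2
    by_cases hn : n = 0
    · subst hn
      rw [if_pos (by omega), show j + 1 - 1 = j by omega]
      simp [Af]
    · by_cases hjm : j = C.m
      · subst hjm
        rw [C.If (n + 1) (by omega) hk2, map_zero, if_neg (by omega)]
      · rw [C.Ie hj1 (by omega) (show 1 ≤ n by omega) (show n ≤ C.m - 1 by omega)]
        rw [map_sub, map_smul, C.p1_x2, smul_zero, zero_sub]
        rw [ih (by omega) (by omega) (j + 1) (by omega) (by omega)]
        rw [show j + 1 + n - 1 = j + n by omega, show j + (n + 1) - 1 = j + n by omega]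
        by_cases hc : j + n ≤ C.m
        · rw [if_pos hc, if_pos hc]
          rw [show n + 1 - 1 = (n - 1) + 1 by omega, pow_succ]
          ring
        · rw [if_neg hc, if_neg hc, neg_zero]

/-- If some product `[y_j,y_k]` has a nonzero `x₁`-coefficient, some `Af l ≠ 0`. -/
lemma Af_exists {j k : ℕ} (hj1 : 1 ≤ j) (hj2 : j ≤ C.m) (hk1 : 1 ≤ k) (hk2 : k ≤ C.m)
    (h : C.p1 (C.Mf j k) ≠ 0) : 1 ≤ j + k - 1 ∧ j + k - 1 ≤ C.m ∧ C.Af (j + k - 1) ≠ 0 := by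
  rw [C.Astruct k hk1 hk2 j hj1 hj2] at h
  by_cases hc : j + k - 1 ≤ C.m
  · rw [if_pos hc] at h
    exact ⟨by omega, hc, fun h0 => h (by rw [h0, mul_zero])⟩
  · rw [if_neg hc] at h
    exact absurd rfl h

/-- `π₂`-structure, in the case all `x₁`-coefficients vanish. -/
lemma Bstruct (hA : ∀ j, 1 ≤ j → j ≤ C.m → ∀ k, 1 ≤ k → k ≤ C.m → C.p1 (C.Mf j k) = 0) :
    ∀ k, 1 ≤ k → k ≤ C.m → ∀ j, 1 ≤ j → j ≤ C.m →
    C.p2 (C.Mf j k) = if j + k - 1 ≤ C.m then (-1 : ℂ) ^ (k - 1) * C.Bf (j + k - 1) else 0 := by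
  intro k
  induction k with
  | zero => omega
  | succ n ih =>
    intro hk1 hk2 j hj1 hj2
    by_cases hn : n = 0
    · subst hn
      rw [if_pos (by omega), show j + 1 - 1 = j by omega]
      simp [Bf]
    · by_cases hjm : j = C.m
      · subst hjm
        rw [C.If (n + 1) (by omega) hk2, map_zero, if_neg (by omega)]
      · rw [C.Ie hj1 (by omega) (show 1 ≤ n by omega) (show n ≤ C.m - 1 by omega)]
        rw [map_sub, map_smul, C.p2_x2, hA j hj1 hj2 n (by omega) (by omega), zero_smul,
          zero_sub]
        rw [ih (by omega) (by omega) (j + 1) (by omega) (by omega)]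
        rw [show j + 1 + n - 1 = j + n by omega, show j + (n + 1) - 1 = j + n by omega]
        by_cases hc : j + n ≤ C.m
        · rw [if_pos hc, if_pos hc]
          rw [show n + 1 - 1 = (n - 1) + 1 by omega, pow_succ]
          ring
        · rw [if_neg hc, if_neg hc, neg_zero]

lemma Ih11 {i : ℕ} (hi1 : 1 ≤ i) (hi2 : i ≤ C.m - 1) :
    C.p1 (C.Mf 1 1) • C.y (i + 1)
      = (2 : ℂ) • (C.Af i • C.cc 1 + C.Bf i • C.dd 1) := by
  have hm := C.hm
  have h := C.Ih hi1 hi2 (le_refl 1) (by omega) (le_refl 1) (by omega)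
  rw [h, two_smul]
  rfl

lemma br_x2_w (u : L) :
    C.S.bracket (C.x 2) u = ∑ q ∈ Finset.Icc 1 C.m, C.dl q u • C.dd q := by
  rw [C.brackL (C.x 2) u, C.bx21, C.bx22, smul_zero, smul_zero, zero_add, zero_add]
  rfl

lemma br_yp_w {p : ℕ} (hp1 : 1 ≤ p) (hp2 : p ≤ C.m - 1) (u : L) :
    C.S.bracket (C.y p) u
      = C.p1 u • C.y (p + 1) + ∑ q ∈ Finset.Icc 1 C.m, C.dl q u • C.Mf p q := by
  rw [C.brackL (C.y p) u, C.byx1 p hp1 hp2, C.byx2 p hp1 (by have := C.hm; omega), smul_zero,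
    add_zero]
  rfl

lemma br_ym_w (u : L) :
    C.S.bracket (C.y C.m) u = ∑ q ∈ Finset.Icc 1 C.m, C.dl q u • C.Mf C.m q := by
  rw [C.brackL (C.y C.m) u, C.bym, C.byx2 C.m (by have := C.hm; omega) le_rfl, smul_zero,
    smul_zero, zero_add, zero_add]
  rfl

/-- `[y_m, u] = 0` for all `u`. -/
lemma br_ym_zero (u : L) : C.S.bracket (C.y C.m) u = 0 := by
  rw [C.br_ym_w u]
  exact Finset.sum_eq_zero fun q hq =>
    by rw [C.If q (Finset.mem_Icc.mp hq).1 (Finset.mem_Icc.mp hq).2, smul_zero]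

/- ### Functional evaluations of brackets -/

lemma phi_br (φ : L →ₗ[ℂ] ℂ) (v u : L) :
    φ (C.S.bracket v u)
      = C.p1 v * φ (C.S.bracket (C.x 1) u) + C.p2 v * φ (C.S.bracket (C.x 2) u)
        + ∑ p ∈ Finset.Icc 1 C.m, C.dl p v * φ (C.S.bracket (C.y p) u) := by
  rw [C.brackR v u, map_add, map_add, map_smul, map_smul, map_sum]
  simp only [smul_eq_mul]
  congr 1
  exact Finset.sum_congr rfl fun p _ => by rw [map_smul, smul_eq_mul]

lemma phi_x1 (φ : L →ₗ[ℂ] ℂ) (u : L) :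
    φ (C.S.bracket (C.x 1) u)
      = C.p1 u * φ (C.x 2) + ∑ q ∈ Finset.Icc 1 C.m, C.dl q u * φ (C.cc q) := by
  rw [C.br_x1_w u, map_add, map_smul, map_sum, smul_eq_mul]
  congr 1
  exact Finset.sum_congr rfl fun q _ => by rw [map_smul, smul_eq_mul]

lemma phi_x2 (φ : L →ₗ[ℂ] ℂ) (u : L) :
    φ (C.S.bracket (C.x 2) u) = ∑ q ∈ Finset.Icc 1 C.m, C.dl q u * φ (C.dd q) := by
  rw [C.br_x2_w u, map_sum]
  exact Finset.sum_congr rfl fun q _ => by rw [map_smul, smul_eq_mul]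

lemma phi_yp (φ : L →ₗ[ℂ] ℂ) {p : ℕ} (hp1 : 1 ≤ p) (hp2 : p ≤ C.m - 1) (u : L) :
    φ (C.S.bracket (C.y p) u)
      = C.p1 u * φ (C.y (p + 1)) + ∑ q ∈ Finset.Icc 1 C.m, C.dl q u * φ (C.Mf p q) := by
  rw [C.br_yp_w hp1 hp2 u, map_add, map_smul, map_sum, smul_eq_mul]
  congr 1
  exact Finset.sum_congr rfl fun q _ => by rw [map_smul, smul_eq_mul]

lemma phi_x1_zero (φ : L →ₗ[ℂ] ℂ) (u : L) (h2 : φ (C.x 2) = 0)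
    (hc : ∀ q, 1 ≤ q → q ≤ C.m → φ (C.cc q) = 0) : φ (C.S.bracket (C.x 1) u) = 0 := by
  rw [C.phi_x1 φ u, h2, mul_zero, zero_add]
  exact Finset.sum_eq_zero fun q hq => by
    rw [hc q (Finset.mem_Icc.mp hq).1 (Finset.mem_Icc.mp hq).2, mul_zero]

lemma phi_x2_zero (φ : L →ₗ[ℂ] ℂ) (u : L)
    (hd : ∀ q, 1 ≤ q → q ≤ C.m → φ (C.dd q) = 0) : φ (C.S.bracket (C.x 2) u) = 0 := by
  rw [C.phi_x2 φ u]
  exact Finset.sum_eq_zero fun q hq => by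
    rw [hd q (Finset.mem_Icc.mp hq).1 (Finset.mem_Icc.mp hq).2, mul_zero]

lemma phi_yp_zero (φ : L →ₗ[ℂ] ℂ) {p : ℕ} (hp1 : 1 ≤ p) (hpm : p ≤ C.m) (u : L)
    (hy : p ≤ C.m - 1 → φ (C.y (p + 1)) = 0)
    (hM : ∀ q, 1 ≤ q → q ≤ C.m → φ (C.Mf p q) = 0) : φ (C.S.bracket (C.y p) u) = 0 := by
  by_cases hp' : p ≤ C.m - 1
  · rw [C.phi_yp φ hp1 hp' u, hy hp', mul_zero, zero_add]
    exact Finset.sum_eq_zero fun q hq => by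
      rw [hM q (Finset.mem_Icc.mp hq).1 (Finset.mem_Icc.mp hq).2, mul_zero]
  · have hpm' : p = C.m := by have := C.hm; omega
    subst hpm'
    rw [C.br_ym_w u, map_sum]
    exact Finset.sum_eq_zero fun q hq => by
      rw [map_smul, smul_eq_mul,
        hM q (Finset.mem_Icc.mp hq).1 (Finset.mem_Icc.mp hq).2, mul_zero]

lemma phi_br_zero (φ : L →ₗ[ℂ] ℂ) (v u : L)
    (hx1 : C.p1 v = 0 ∨ φ (C.S.bracket (C.x 1) u) = 0)
    (hx2 : C.p2 v = 0 ∨ φ (C.S.bracket (C.x 2) u) = 0)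
    (hy : ∀ p, 1 ≤ p → p ≤ C.m → C.dl p v = 0 ∨ φ (C.S.bracket (C.y p) u) = 0) :
    φ (C.S.bracket v u) = 0 := by
  rw [C.phi_br φ v u]
  have h1 : C.p1 v * φ (C.S.bracket (C.x 1) u) = 0 := by
    rcases hx1 with h | h
    · rw [h, zero_mul]
    · rw [h, mul_zero]
  have h2 : C.p2 v * φ (C.S.bracket (C.x 2) u) = 0 := by
    rcases hx2 with h | h
    · rw [h, zero_mul]
    · rw [h, mul_zero]
  rw [h1, h2, zero_add, zero_add]
  refine Finset.sum_eq_zero fun p hp => ?_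
  rcases hy p (Finset.mem_Icc.mp hp).1 (Finset.mem_Icc.mp hp).2 with h | h
  · rw [h, zero_mul]
  · rw [h, mul_zero]

/-- Under `π₁∘M ≡ 0`: elements of `term 1` have no `x₁` and no `y₁` component. -/
lemma T1claim (hA : ∀ j, 1 ≤ j → j ≤ C.m → ∀ k, 1 ≤ k → k ≤ C.m → C.p1 (C.Mf j k) = 0) :
    ∀ v ∈ C.S.term 1, C.p1 v = 0 ∧ C.dl 1 v = 0 := by
  have hm := C.hm
  have hle : C.S.term (0 + 1) ≤ LinearMap.ker C.p1 ⊓ LinearMap.ker (C.dl 1) := by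
    refine C.term_succ_le fun a _ u => Submodule.mem_inf.mpr ⟨?_, ?_⟩
    · show C.p1 (C.S.bracket a u) = 0
      refine C.phi_br_zero _ a u (Or.inr ?_) (Or.inr ?_) (fun p hp1 hpm => Or.inr ?_)
      · exact C.phi_x1_zero _ u C.p1_x2 fun q h1 h2 => C.p1_cc h1 h2
      · exact C.phi_x2_zero _ u fun q h1 h2 => C.p1_dd h1 h2
      · exact C.phi_yp_zero _ hp1 hpm u (fun h => C.p1_y (by omega) (by omega))
          fun q h1 h2 => hA p hp1 hpm q h1 h2
    · show C.dl 1 (C.S.bracket a u) = 0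
      refine C.phi_br_zero _ a u (Or.inr ?_) (Or.inr ?_) (fun p hp1 hpm => Or.inr ?_)
      · exact C.phi_x1_zero _ u (C.dl_x2 1) fun q h1 h2 => C.dl1_cc h1 h2
      · exact C.phi_x2_zero _ u fun q h1 h2 => C.dl1_dd h1 h2
      · refine C.phi_yp_zero _ hp1 hpm u (fun h => ?_) fun q h1 h2 => C.dl_Mf hp1 hpm h1 h2 1
        rw [C.dl_y le_rfl (by omega) (by omega) (by omega), if_neg (by omega)]
  intro v hv
  exact Submodule.mem_inf.mp (hle hv)

lemma Brel (hA : ∀ j, 1 ≤ j → j ≤ C.m → ∀ k, 1 ≤ k → k ≤ C.m → C.p1 (C.Mf j k) = 0)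
    {i : ℕ} (hi1 : 1 ≤ i) (hi2 : i ≤ C.m - 1) :
    C.Bf i • C.dd 2 = C.Bf (i + 1) • C.dd 1 := by
  have hm := C.hm
  have h := C.Ih hi1 hi2 (j := 1) le_rfl (by omega) (k := 2) (by omega) (by omega)
  rw [hA 1 le_rfl (by omega) 2 (by omega) (by omega),
    hA i hi1 (by omega) 1 le_rfl (by omega),
    hA i hi1 (by omega) 2 (by omega) (by omega),
    zero_smul, zero_smul, zero_smul, zero_add, zero_add] at h
  have hie : C.p2 (C.Mf i 2) = - C.Bf (i + 1) := by
    have he := C.Ie hi1 hi2 (j := 1) le_rfl (by omega)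
    rw [hA i hi1 (by omega) 1 le_rfl (by omega), zero_smul, zero_sub] at he
    rw [show (2 : ℕ) = 1 + 1 from rfl, he, map_neg, C.Bf_def]
  rw [hie, C.Bf_def, neg_smul] at h
  have h2 := h.symm
  rwa [add_neg_eq_zero] at h2

lemma caseA0_B (hA : ∀ j, 1 ≤ j → j ≤ C.m → ∀ k, 1 ≤ k → k ≤ C.m → C.p1 (C.Mf j k) = 0)
    (hB : ∃ i, 2 ≤ i ∧ i ≤ C.m ∧ C.Bf i ≠ 0) : False := by
  have hm := C.hm
  obtain ⟨i0, hi02, hi0m, hi0⟩ := hB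
  set T := (Finset.Icc 2 C.m).filter (fun i => C.Bf i ≠ 0) with hT
  have hne : T.Nonempty := ⟨i0, Finset.mem_filter.mpr ⟨Finset.mem_Icc.mpr ⟨hi02, hi0m⟩, hi0⟩⟩
  have hlmem := T.max'_mem hne
  set l := T.max' hne with hl
  rw [hT, Finset.mem_filter, Finset.mem_Icc] at hlmem
  obtain ⟨⟨hl2, hlm⟩, hlB⟩ := hlmem
  have hmax : ∀ i, 2 ≤ i → i ≤ C.m → l < i → C.Bf i = 0 := by
    intro i h2 hm' hli
    by_contra hne'
    have := Finset.le_max' T i (Finset.mem_filter.mpr ⟨Finset.mem_Icc.mpr ⟨h2, hm'⟩, hne'⟩)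
    omega
  have hBm : C.Bf C.m = 0 := by
    show C.p2 (C.Mf C.m 1) = 0
    rw [C.If 1 le_rfl (by omega), map_zero]
  have hlm1 : l ≤ C.m - 1 := by
    rcases eq_or_lt_of_le hlm with h | h
    · exact absurd (h ▸ hBm) hlB
    · omega
  have hdd2 : C.dd 2 = 0 := by
    have h := C.Brel hA (show 1 ≤ l by omega) (show l ≤ C.m - 1 by omega)
    have hBl1 : C.Bf (l + 1) = 0 := by
      rcases eq_or_lt_of_le (show l + 1 ≤ C.m by omega) with h' | h'
      · rw [h']; exact hBm
      · exact hmax (l + 1) (by omega) (by omega) (by omega)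
    rw [hBl1, zero_smul] at h
    exact (smul_eq_zero.mp h).resolve_left hlB
  have hdd1 : C.dd 1 = 0 := by
    have h := C.Brel hA (show 1 ≤ l - 1 by omega) (show l - 1 ≤ C.m - 1 by omega)
    rw [show l - 1 + 1 = l by omega, hdd2, smul_zero] at h
    exact (smul_eq_zero.mp h.symm).resolve_left hlB
  have hddall : ∀ j, 1 ≤ j → j ≤ C.m → C.dd j = 0 := by
    intro j
    induction j with
    | zero => omega
    | succ n ih =>
      intro _ hn
      by_cases hn0 : n = 0
      · subst hn0; exact hdd1
      · rw [C.Ib (by omega) (by omega), ih (by omega) (by omega), map_zero,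
          LinearMap.zero_apply]
  have P : ∀ t, 1 ≤ t → t ≤ C.m - 1 → ∀ v ∈ C.S.term t,
      C.p1 v = 0 ∧ ∀ p, 1 ≤ p → p ≤ t → C.dl p v = 0 := by
    intro t
    induction t with
    | zero => omega
    | succ n ih =>
      intro _ hn v hv
      by_cases hn0 : n = 0
      · subst hn0
        have h := C.T1claim hA v hv
        exact ⟨h.1, fun p hp1 hp2 => by rw [show p = 1 by omega]; exact h.2⟩
      · have hstep : C.S.term (n + 1) ≤ LinearMap.ker C.p1
            ⊓ (⨅ p ∈ Finset.Icc 1 (n + 1), LinearMap.ker (C.dl p)) := by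
          refine C.term_succ_le fun a ha u => ?_
          obtain ⟨ha1, ha2⟩ := ih (by omega) (by omega) a ha
          refine Submodule.mem_inf.mpr ⟨?_, ?_⟩
          · show C.p1 (C.S.bracket a u) = 0
            refine C.phi_br_zero _ a u (Or.inl ha1)
              (Or.inr (C.phi_x2_zero _ u fun q h1 h2 => C.p1_dd h1 h2))
              (fun p hp1 hpm => ?_)
            by_cases hpn : p ≤ n
            · exact Or.inl (ha2 p hp1 hpn)
            · exact Or.inr (C.phi_yp_zero _ hp1 hpm u
                (fun h => C.p1_y (by omega) (by omega))
                (fun q h1 h2 => hA p hp1 hpm q h1 h2))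
          · refine (Submodule.mem_iInf _).mpr fun p => (Submodule.mem_iInf _).mpr fun hp => ?_
            obtain ⟨hp1, hpn1⟩ := Finset.mem_Icc.mp hp
            show C.dl p (C.S.bracket a u) = 0
            refine C.phi_br_zero _ a u (Or.inl ha1)
              (Or.inr (C.phi_x2_zero _ u fun q h1 h2 => by rw [hddall q h1 h2, map_zero]))
              (fun r hr1 hrm => ?_)
            by_cases hrn : r ≤ n
            · exact Or.inl (ha2 r hr1 hrn)
            · refine Or.inr (C.phi_yp_zero _ hr1 hrm u (fun h => ?_)
                (fun q h1 h2 => C.dl_Mf hr1 hrm h1 h2 p))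
              rw [C.dl_y hp1 (by omega) (by omega) (by omega), if_neg (by omega)]
        have hmem := Submodule.mem_inf.mp (hstep hv)
        refine ⟨hmem.1, fun p hp1 hp2 => ?_⟩
        have h1 := (Submodule.mem_iInf _).mp hmem.2 p
        have h2 := (Submodule.mem_iInf _).mp h1 (Finset.mem_Icc.mpr ⟨hp1, hp2⟩)
        exact h2
  have hfin : C.S.term C.m = ⊥ := by
    have hle : C.S.term ((C.m - 1) + 1) ≤ ⊥ := by
      refine C.term_succ_le fun v hv u => ?_
      obtain ⟨hv1, hv2⟩ := P (C.m - 1) (by omega) le_rfl v hv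
      rw [Submodule.mem_bot]
      rw [C.brackR v u, hv1, zero_smul, zero_add]
      rw [C.br_x2_w u, Finset.sum_eq_zero (fun q hq => by
        rw [hddall q (Finset.mem_Icc.mp hq).1 (Finset.mem_Icc.mp hq).2, smul_zero]), smul_zero,
        zero_add]
      refine Finset.sum_eq_zero fun p hp => ?_
      obtain ⟨hp1, hpm⟩ := Finset.mem_Icc.mp hp
      by_cases hpn : p ≤ C.m - 1
      · rw [hv2 p hp1 hpn, zero_smul]
      · rw [show p = C.m by omega, C.br_ym_zero u, smul_zero]
    rw [show C.m - 1 + 1 = C.m by omega] at hle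
    exact le_bot_iff.mp hle
  exact C.hnil2 hfin

lemma caseA0_noB (hA : ∀ j, 1 ≤ j → j ≤ C.m → ∀ k, 1 ≤ k → k ≤ C.m → C.p1 (C.Mf j k) = 0)
    (hB : ∀ i, 2 ≤ i → i ≤ C.m → C.Bf i = 0) : False := by
  have hm := C.hm
  have hMz : ∀ j, 1 ≤ j → j ≤ C.m → ∀ k, 1 ≤ k → k ≤ C.m → ¬(j = 1 ∧ k = 1) →
      C.Mf j k = 0 := by
    intro j hj1 hj2 k hk1 hk2 hjk
    have h0 := C.L0ex (C.Mf_mem hj1 hj2 hk1 hk2)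
    rw [hA j hj1 hj2 k hk1 hk2, zero_smul, zero_add] at h0
    rw [C.Bstruct hA k hk1 hk2 j hj1 hj2] at h0
    by_cases hc : j + k - 1 ≤ C.m
    · rw [if_pos hc, hB (j + k - 1) (by omega) hc, mul_zero, zero_smul] at h0
      exact h0
    · rw [if_neg hc, zero_smul] at h0
      exact h0
  have Q : ∀ t, 2 ≤ t → t ≤ C.m → ∀ v ∈ C.S.term t,
      (C.p1 v = 0 ∧ C.p2 v = 0) ∧ ∀ p, 1 ≤ p → p ≤ t → C.dl p v = 0 := by
    intro t
    induction t with
    | zero => omega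
    | succ n ih =>
      intro h2 hnm v hv
      by_cases hn1 : n = 1
      · subst hn1
        have hstep : C.S.term 2 ≤ (LinearMap.ker C.p1 ⊓ LinearMap.ker C.p2)
            ⊓ (LinearMap.ker (C.dl 1) ⊓ LinearMap.ker (C.dl 2)) := by
          refine C.term_succ_le fun a ha u => ?_
          obtain ⟨ha1, ha2⟩ := C.T1claim hA a ha
          have main : ∀ φ : L →ₗ[ℂ] ℂ, (∀ q, 1 ≤ q → q ≤ C.m → φ (C.dd q) = 0) →
              (∀ r, 3 ≤ r → r ≤ C.m → φ (C.y r) = 0) → φ (C.S.bracket a u) = 0 := by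
            intro φ hφd hφy
            refine C.phi_br_zero φ a u (Or.inl ha1) (Or.inr (C.phi_x2_zero φ u hφd))
              (fun p hp1 hpm => ?_)
            by_cases hp1' : p = 1
            · exact Or.inl (by rw [hp1']; exact ha2)
            · refine Or.inr (C.phi_yp_zero φ hp1 hpm u
                (fun h => hφy (p + 1) (by omega) (by omega))
                (fun q h1 h2 => by rw [hMz p hp1 hpm q h1 h2 (fun he => hp1' he.1), map_zero]))
          refine Submodule.mem_inf.mpr ⟨Submodule.mem_inf.mpr ⟨?_, ?_⟩,
            Submodule.mem_inf.mpr ⟨?_, ?_⟩⟩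
          · exact main C.p1 (fun q h1 h2 => C.p1_dd h1 h2) (fun r h1 h2 => C.p1_y (by omega) h2)
          · exact main C.p2 (fun q h1 h2 => C.p2_dd h1 h2) (fun r h1 h2 => C.p2_y (by omega) h2)
          · refine main (C.dl 1) (fun q h1 h2 => C.dl1_dd h1 h2) (fun r h1 h2 => ?_)
            rw [C.dl_y le_rfl (by omega) (by omega) h2, if_neg (by omega)]
          · refine main (C.dl 2) (fun q h1 h2 => C.dl2_dd h1 h2) (fun r h1 h2 => ?_)
            rw [C.dl_y (by omega) (by omega) (by omega) h2, if_neg (by omega)]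
        have hmem := Submodule.mem_inf.mp (hstep hv)
        have hmem1 := Submodule.mem_inf.mp hmem.1
        have hmem2 := Submodule.mem_inf.mp hmem.2
        refine ⟨⟨hmem1.1, hmem1.2⟩, fun p hp1 hp2 => ?_⟩
        rcases (show p = 1 ∨ p = 2 by omega) with h | h
        · rw [h]; exact hmem2.1
        · rw [h]; exact hmem2.2
      · have hstep : C.S.term (n + 1) ≤ (LinearMap.ker C.p1 ⊓ LinearMap.ker C.p2)
            ⊓ (⨅ p ∈ Finset.Icc 1 (n + 1), LinearMap.ker (C.dl p)) := by
          refine C.term_succ_le fun a ha u => ?_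
          obtain ⟨⟨ha1, ha2⟩, ha3⟩ := ih (by omega) (by omega) a ha
          have main : ∀ φ : L →ₗ[ℂ] ℂ, (∀ r, n + 2 ≤ r → r ≤ C.m → φ (C.y r) = 0) →
              φ (C.S.bracket a u) = 0 := by
            intro φ hφy
            refine C.phi_br_zero φ a u (Or.inl ha1) (Or.inl ha2) (fun p hp1 hpm => ?_)
            by_cases hpn : p ≤ n
            · exact Or.inl (ha3 p hp1 hpn)
            · refine Or.inr (C.phi_yp_zero φ hp1 hpm u
                (fun h => hφy (p + 1) (by omega) (by omega))
                (fun q h1 h2 => by rw [hMz p hp1 hpm q h1 h2 (fun he => by omega), map_zero]))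
          refine Submodule.mem_inf.mpr ⟨Submodule.mem_inf.mpr ⟨?_, ?_⟩, ?_⟩
          · exact main C.p1 (fun r h1 h2 => C.p1_y (by omega) h2)
          · exact main C.p2 (fun r h1 h2 => C.p2_y (by omega) h2)
          · refine (Submodule.mem_iInf _).mpr fun p => (Submodule.mem_iInf _).mpr fun hp => ?_
            obtain ⟨hp1, hpn1⟩ := Finset.mem_Icc.mp hp
            refine main (C.dl p) (fun r h1 h2 => ?_)
            rw [C.dl_y hp1 (by omega) (by omega) h2, if_neg (by omega)]
        have hmem := Submodule.mem_inf.mp (hstep hv)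
        have hmem1 := Submodule.mem_inf.mp hmem.1
        refine ⟨⟨hmem1.1, hmem1.2⟩, fun p hp1 hp2 => ?_⟩
        have h1 := (Submodule.mem_iInf _).mp hmem.2 p
        exact (Submodule.mem_iInf _).mp h1 (Finset.mem_Icc.mpr ⟨hp1, hp2⟩)
  have hfin : C.S.term C.m ≤ ⊥ := by
    intro v hv
    obtain ⟨⟨h1, h2⟩, h3⟩ := Q C.m (by omega) le_rfl v hv
    have hmaster := C.masterI v
    rw [h1, h2, zero_smul, zero_smul, zero_add, zero_add] at hmaster
    rw [Finset.sum_eq_zero (fun p hp => by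
      rw [h3 p (Finset.mem_Icc.mp hp).1 (Finset.mem_Icc.mp hp).2, zero_smul])] at hmaster
    rw [Submodule.mem_bot]
    exact hmaster
  exact C.hnil2 (le_bot_iff.mp hfin)

lemma br_y_w {i : ℕ} (hi1 : 1 ≤ i) (hi2 : i ≤ C.m - 1) {w : L} (hw : w ∈ C.S.L1) :
    C.S.bracket (C.y i) w = ∑ p ∈ Finset.Icc 1 C.m, C.dl p w • C.Mf i p := by
  rw [C.br_yp_w hi1 hi2 w, show C.p1 w = 0 from C.p1_L1 hw, zero_smul, zero_add]

lemma caseA (hA : ¬ ∀ j, 1 ≤ j → j ≤ C.m → ∀ k, 1 ≤ k → k ≤ C.m → C.p1 (C.Mf j k) = 0) :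
    False := by
  have hm := C.hm
  push_neg at hA
  obtain ⟨j, hj1, hj2, k, hk1, hk2, hjk⟩ := hA
  obtain ⟨hl1', hl2', hlA'⟩ := C.Af_exists hj1 hj2 hk1 hk2 hjk
  set T := (Finset.Icc 1 C.m).filter (fun i => C.Af i ≠ 0) with hT
  have hne : T.Nonempty :=
    ⟨j + k - 1, Finset.mem_filter.mpr ⟨Finset.mem_Icc.mpr ⟨hl1', hl2'⟩, hlA'⟩⟩
  have hlmem := T.max'_mem hne
  set l := T.max' hne with hl
  rw [hT, Finset.mem_filter, Finset.mem_Icc] at hlmem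
  obtain ⟨⟨hl1, hlm⟩, hlA⟩ := hlmem
  have hmax : ∀ i, 1 ≤ i → i ≤ C.m → l < i → C.Af i = 0 := by
    intro i h1 h2 hli
    by_contra hne'
    have := Finset.le_max' T i (Finset.mem_filter.mpr ⟨Finset.mem_Icc.mpr ⟨h1, h2⟩, hne'⟩)
    omega
  have hlm1 : l ≤ C.m - 1 := by
    by_contra hc
    have he : l = C.m := by omega
    rw [he] at hlA
    exact hlA C.Af_m
  have hAz : ∀ j', 1 ≤ j' → j' ≤ C.m → ∀ k', 1 ≤ k' → k' ≤ C.m → l < j' + k' - 1 →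
      C.p1 (C.Mf j' k') = 0 := by
    intro j' h1 h2 k' h3 h4 h5
    rw [C.Astruct k' h3 h4 j' h1 h2]
    by_cases hc : j' + k' - 1 ≤ C.m
    · rw [if_pos hc, hmax _ (by omega) hc h5, mul_zero]
    · rw [if_neg hc]
  by_cases hl2 : 2 ≤ l
  · -- subcase l ≥ 2
    have hXi : C.dl 2 (C.cc 1) * (-1 * C.Af l) = C.Af l := by
      have hIg := C.Ig (i := l - 1) (by omega) (by omega) (j := 1) le_rfl (by omega)
      rw [show l - 1 + 1 = l by omega] at hIg
      rw [C.br_y_w (by omega) (by omega) (C.cc_mem le_rfl (by omega))] at hIg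
      have h1 := congrArg C.p1 hIg
      rw [map_sum, map_sub, map_smul, C.p1_x2, smul_zero, sub_zero, C.Af_def] at h1
      rw [Finset.sum_eq_single 2] at h1
      · rw [map_smul, smul_eq_mul,
          C.Astruct 2 (by omega) (by omega) (l - 1) (by omega) (by omega),
          if_pos (by omega), show l - 1 + 2 - 1 = l by omega,
          show (2 : ℕ) - 1 = 1 from rfl, pow_one] at h1
        exact h1
      · intro q hq hq2
        obtain ⟨hqa, hqb⟩ := Finset.mem_Icc.mp hq
        rw [map_smul, smul_eq_mul]
        rcases eq_or_lt_of_le hqa with h' | h'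
        · rw [← h', C.dl1_cc1, zero_mul]
        · rw [hAz (l - 1) (by omega) (by omega) q (by omega) hqb (by omega), mul_zero]
      · intro hnot
        exact absurd (Finset.mem_Icc.mpr ⟨by omega, by omega⟩) hnot
    have hp2v : C.dl 2 (C.cc 1) = -1 := by
      have h2 : (C.dl 2 (C.cc 1) + 1) * C.Af l = 0 := by linear_combination -hXi
      rcases mul_eq_zero.mp h2 with h | h
      · exact eq_neg_of_add_eq_zero_left h
      · exact absurd h hlA
    have h3 := congrArg (C.dl 2) (C.Ih11 (i := l) (by omega) hlm1)
    simp only [map_smul, map_add, smul_eq_mul] at h3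
    rw [C.dl_y (by omega) (by omega) (by omega) (by omega), if_neg (by omega), mul_zero,
      hp2v, C.dl2_dd1, mul_zero, add_zero] at h3
    -- h3 : 0 = 2 * (Af l * -1)
    have : C.Af l = 0 := by linear_combination (1 / 2 : ℂ) * h3
    exact hlA this
  · -- subcase l = 1
    have hl1e : l = 1 := by omega
    rw [hl1e] at hlA
    have hAz' : ∀ i, 2 ≤ i → i ≤ C.m → C.Af i = 0 := fun i h1 h2 =>
      hmax i (by omega) h2 (by omega)
    have eq_i : ∀ i, 2 ≤ i → i ≤ C.m - 1 →
        C.Af 1 • C.y (i + 1) = (2 : ℂ) • (C.Bf i • C.dd 1) := by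
      intro i h2 hi2
      have h := C.Ih11 (i := i) (by omega) hi2
      rw [C.Af_def, hAz' i h2 (by omega), zero_smul, zero_add] at h
      exact h
    have e2 := eq_i 2 le_rfl (by omega)
    have f1 := congrArg (C.dl 3) e2
    simp only [map_smul, smul_eq_mul] at f1
    rw [C.dl_y (by omega) (by omega) (by omega) (by omega), if_pos rfl, mul_one] at f1
    -- f1 : Af 1 = 2 * (Bf 2 * dl 3 (dd 1))
    have hB2 : C.Bf 2 ≠ 0 := fun h0 => hlA (by rw [h0, zero_mul, mul_zero] at f1; exact f1)
    by_cases hm4 : 4 ≤ C.m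
    · have e3 := eq_i 3 (by omega) (by omega)
      have f2 := congrArg (C.dl 4) e2
      simp only [map_smul, smul_eq_mul] at f2
      rw [C.dl_y (by omega) (by omega) (by omega) (by omega), if_neg (by omega), mul_zero] at f2
      have f3 := congrArg (C.dl 4) e3
      simp only [map_smul, smul_eq_mul] at f3
      rw [C.dl_y (by omega) (by omega) (by omega) (by omega), if_pos rfl, mul_one] at f3
      have hx : C.Bf 2 * C.dl 4 (C.dd 1) = 0 := by linear_combination (-1 / 2 : ℂ) * f2
      have hd4 : C.dl 4 (C.dd 1) = 0 := (mul_eq_zero.mp hx).resolve_left hB2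
      rw [hd4, mul_zero, mul_zero] at f3
      exact hlA f3
    · -- m = 3
      have hm3 : C.m = 3 := by omega
      have hM11T1 : C.Mf 1 1 ∈ C.S.term 1 :=
        C.mem_term_succ (Submodule.mem_top : C.y 1 ∈ C.S.term 0) (C.y 1)
      have hx1T1 : C.x 1 ∈ C.S.term 1 := by
        have hex := C.L0ex (C.Mf_mem le_rfl (by omega) le_rfl (by omega))
        rw [C.Af_def, C.Bf_def] at hex
        have hsub : C.Af 1 • C.x 1 = C.Mf 1 1 - C.Bf 1 • C.x 2 := by
          rw [hex]; abel
        have hmem : C.Af 1 • C.x 1 ∈ C.S.term 1 := by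
          rw [hsub]
          exact Submodule.sub_mem _ hM11T1 (Submodule.smul_mem _ _ C.x2_term1)
        exact (Submodule.smul_mem_iff _ hlA).mp hmem
      have hcc1T2 : C.cc 1 ∈ C.S.term 2 := C.mem_term_succ hx1T1 (C.y 1)
      have g1 := congrArg (C.dl 2) (C.Ih11 (i := 1) le_rfl (by omega))
      simp only [map_smul, map_add, smul_eq_mul] at g1
      rw [C.Af_def, C.dl_y (by omega) (by omega) (by omega) (by omega), if_pos rfl, mul_one,
        C.dl2_dd1, mul_zero, add_zero] at g1
      -- g1 : Af 1 = 2 * (Af 1 * dl 2 (cc 1))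
      have hq : C.dl 2 (C.cc 1) ≠ 0 := by
        intro h0
        rw [h0, mul_zero, mul_zero] at g1
        exact hlA g1
      have hw : C.S.bracket (C.cc 1) (C.y 1) = (C.dl 2 (C.cc 1) * C.Bf 2) • C.x 2 := by
        rw [C.brackR (C.cc 1) (C.y 1), C.p1_cc le_rfl (by omega), C.p2_cc le_rfl (by omega),
          zero_smul, zero_smul, zero_add, zero_add, hm3]
        rw [show Finset.Icc 1 3 = {1, 2, 3} from by decide]
        rw [Finset.sum_insert (by decide), Finset.sum_insert (by decide),
          Finset.sum_singleton]
        rw [C.dl1_cc1, zero_smul, zero_add, C.Mf_def 2 1, C.Mf_def 3 1]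
        rw [show C.Mf 3 1 = 0 from by rw [← hm3]; exact C.If 1 le_rfl (by omega), smul_zero,
          add_zero]
        have hex2 := C.L0ex (C.Mf_mem (i := 2) (by omega) (by omega) le_rfl (by omega))
        rw [C.Af_def, C.Bf_def, hAz' 2 le_rfl (by omega), zero_smul, zero_add] at hex2
        rw [hex2, smul_smul]
      have hx2T3 : C.x 2 ∈ C.S.term 3 := by
        have hmem := C.mem_term_succ hcc1T2 (C.y 1)
        rw [hw] at hmem
        exact (Submodule.smul_mem_iff _ (mul_ne_zero hq hB2)).mp hmem
      have hdd1T4 : C.dd 1 ∈ C.S.term 4 := C.mem_term_succ hx2T3 (C.y 1)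
      have hdd10 : C.dd 1 = 0 := by
        have h4 : C.S.term 4 = ⊥ := by rw [← show C.m + 1 = 4 by omega]; exact C.hnil1
        rw [h4] at hdd1T4
        exact (Submodule.mem_bot ℂ).mp hdd1T4
      rw [hdd10, map_zero, mul_zero, mul_zero] at f1
      exact hlA f1

end ZFC

/-- The main contradiction. -/
lemma ZFC.main (C : ZFC L) : False := by
  by_cases hA : ∀ j, 1 ≤ j → j ≤ C.m → ∀ k, 1 ≤ k → k ≤ C.m → C.p1 (C.Mf j k) = 0
  · by_cases hB : ∀ i, 2 ≤ i → i ≤ C.m → C.Bf i = 0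
    · exact C.caseA0_noB hA hB
    · push_neg at hB
      obtain ⟨i, h2, hm', hne⟩ := hB
      exact C.caseA0_B hA ⟨i, h2, hm', hne⟩
  · exact C.caseA hA


end AuxDev

open LeibnizSuper in
/-- In `L ∈ ZF^{2,m}` (`m ≥ 3`) of nilindex `m+2` with adapted basis and generators
`x₁, y₁`, writing `[y_m,y₁] = β_{m,2} x₂`, one has `β_{m,2} ≠ 0`. -/
theorem beta_m2_ne_zero {L : Type*} [AddCommGroup L] [Module ℂ L]
    [FiniteDimensional ℂ L] (S : LeibnizSuper L) (m : ℕ) (hm : 3 ≤ m)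
    (hzf : S.ZeroFiliform 2 m) (hnil : S.HasNilindex (m + 2))
    (x y : ℕ → L) (hadapt : S.IsAdaptedPair 2 m x y)
    (hgen : S.Generates {x 1, y 1})
    (βm2 : ℂ) (hβ : S.bracket (y m) (y 1) = βm2 • x 2) :
    βm2 ≠ 0 := by
  intro h0
  rw [h0, zero_smul] at hβ
  obtain ⟨h1, h2, h3, h4, h5, h6, h7, h8, h9, h10⟩ := hadapt
  have hL0 : S.L0 ≤ Submodule.span ℂ (Set.range (fun i : Fin 2 => x ((i : ℕ) + 1))) := by
    have hind : LinearIndependent ℂ (fun i : Fin 2 => x ((i : ℕ) + 1)) :=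
      h3.comp Sum.inl Sum.inl_injective
    have hle : Submodule.span ℂ (Set.range (fun i : Fin 2 => x ((i : ℕ) + 1))) ≤ S.L0 := by
      rw [Submodule.span_le]
      rintro _ ⟨i, rfl⟩
      fin_cases i
      · exact h1 1 le_rfl one_le_two
      · exact h1 2 one_le_two le_rfl
    have heq := Submodule.eq_of_le_of_finrank_le hle (by
      rw [hzf.1, finrank_span_eq_card hind]
      simp)
    exact heq.ge
  have hL1 : S.L1 ≤ Submodule.span ℂ (Set.range (fun j : Fin m => y ((j : ℕ) + 1))) := by
    have hind : LinearIndependent ℂ (fun j : Fin m => y ((j : ℕ) + 1)) :=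
      h3.comp Sum.inr Sum.inr_injective
    have hle : Submodule.span ℂ (Set.range (fun j : Fin m => y ((j : ℕ) + 1))) ≤ S.L1 := by
      rw [Submodule.span_le]
      rintro _ ⟨j, rfl⟩
      exact h2 ((j : ℕ) + 1) (Nat.le_add_left 1 _) j.isLt
    have heq := Submodule.eq_of_le_of_finrank_le hle (by
      rw [hzf.2.1, finrank_span_eq_card hind]
      simp)
    exact heq.ge
  exact ZFC.main
    { S := S
      m := m
      hm := hm
      x := x
      y := y
      indep := h3
      spanT := h4
      hx0 := h1
      hy1 := h2
      bx11 := h5 1 le_rfl le_rfl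
      bx21 := h6
      bx12 := h7 1 2 le_rfl one_le_two le_rfl le_rfl
      bx22 := h7 2 2 one_le_two le_rfl le_rfl le_rfl
      byx1 := h8
      bym := h9
      byx2 := fun j hj1 hj2 => h10 j 2 hj1 hj2 le_rfl le_rfl
      hL0 := hL0
      hL1 := hL1
      hnil1 := hnil.2.1
      hnil2 := hnil.2.2 m (by omega)
      hb := hβ }
end

section
/- Let L ∈ ZF^{2,m} (m ≥ 3) be a zero-filiform Leibniz superalgebra of nilindex m+2 with an adapted basis {x₁,x₂,y₁,…,y_m} whose generators are x₁ and y₁, write [y_i,y₁] = β_{i,2} x₂ for 1 ≤ i ≤ m, and suppose [x₁,y₁] = −y₂ (i.e. the coefficient of y₂ in [x₁,y₁] is −1 and the coefficients of y₃,…,y_m are 0). Then β_{2i,2} = 0 for all 1 ≤ i ≤ ⌊m/2⌋. -/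
open LeibnizSuper in
/-- In `L ∈ ZF^{2,m}` (`m ≥ 3`) of nilindex `m+2` with adapted basis, generators
`x₁, y₁`, `[y_i,y₁] = β_{i,2} x₂` and `[x₁,y₁] = −y₂`, one has `β_{2i,2} = 0`
for all `1 ≤ i ≤ ⌊m/2⌋`. -/
theorem beta_even_eq_zero {L : Type*} [AddCommGroup L] [Module ℂ L]
    [FiniteDimensional ℂ L] (S : LeibnizSuper L) (m : ℕ) (hm : 3 ≤ m)
    (hzf : S.ZeroFiliform 2 m) (hnil : S.HasNilindex (m + 2))
    (x y : ℕ → L) (hadapt : S.IsAdaptedPair 2 m x y)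
    (hgen : S.Generates {x 1, y 1})
    (β : ℕ → ℂ) (hβ : ∀ i, 1 ≤ i → i ≤ m → S.bracket (y i) (y 1) = β i • x 2)
    (hx1y1 : S.bracket (x 1) (y 1) = - y 2) :
    ∀ i, 1 ≤ i → i ≤ m / 2 → β (2 * i) = 0 := by
  obtain ⟨hx0, hy1, hlin, -, hxx, hx2x1, hxk, hyx1, hymx1, hyxk⟩ := hadapt
  have hx2ne : x 2 ≠ 0 := by
    have h := hlin.ne_zero (Sum.inl (⟨1, by norm_num⟩ : Fin 2))
    simpa using h
  have hx1m : x 1 ∈ S.L0 := hx0 1 le_rfl (by norm_num)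
  have hx1x2 : S.bracket (x 1) (x 2) = 0 :=
    hxk 1 2 le_rfl (by norm_num) le_rfl le_rfl
  have hx1x1 : S.bracket (x 1) (x 1) = x 2 := by
    have := hxx 1 le_rfl le_rfl
    norm_num at this
    exact this
  -- general bracket formula: [y_i, y_{j+1}] = (-1)^j β_{i+j} x₂
  have key : ∀ j i : ℕ, 1 ≤ i → i + j ≤ m →
      S.bracket (y i) (y (j + 1)) = ((-1 : ℂ) ^ j * β (i + j)) • x 2 := by
    intro j
    induction j with
    | zero => intro i h1 h2; simpa using hβ i h1 (by omega)
    | succ j ih =>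
      intro i h1 h2
      have hyj1 : y (j + 1 + 1) = S.bracket (y (j + 1)) (x 1) :=
        (hyx1 (j + 1) (by omega) (by omega)).symm
      rw [hyj1,
        S.leib10 (y i) (y (j + 1)) (hy1 (j + 1) (by omega) (by omega)) (x 1) hx1m,
        ih i h1 (by omega), LinearMap.map_smul₂, hx2x1, smul_zero,
        hyx1 i h1 (by omega), ih (i + 1) (by omega) (by omega)]
      have e : i + 1 + j = i + (j + 1) := by omega
      rw [e, zero_sub, pow_succ, ← neg_smul]
      ring_nf
  intro t ht1 ht2
  have h2tm : 2 * t ≤ m := by omega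
  by_cases hb : β (2 * t) = 0
  · exact hb
  exfalso
  have hyx2 : ∀ j, 1 ≤ j → j ≤ m → S.bracket (y j) (x 2) = 0 := fun j h1 h2 =>
    hyxk j 2 h1 h2 le_rfl le_rfl
  -- [x₂, y₁] = 0
  have hc1 : S.bracket (x 2) (y 1) = 0 := by
    have hl := S.leib11 (y (2 * t)) (y 1) (hy1 1 le_rfl (by omega))
      (y 1) (hy1 1 le_rfl (by omega))
    rw [hβ 1 le_rfl (by omega), hβ (2 * t) (by omega) h2tm, map_smul,
      hyx2 (2 * t) (by omega) h2tm, smul_zero, LinearMap.map_smul₂] at hl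
    have h0 : (β (2 * t) + β (2 * t)) • S.bracket (x 2) (y 1) = 0 := by
      rw [add_smul]; exact hl.symm
    rcases smul_eq_zero.mp h0 with h | h
    · exact absurd (by linear_combination h / 2) hb
    · exact h
  -- [x₂, y_j] = 0
  have hcj : ∀ j, 1 ≤ j → j ≤ m → S.bracket (x 2) (y j) = 0 := by
    intro j
    induction j with
    | zero => omega
    | succ j ih =>
      intro h1 h2
      by_cases hj : j = 0
      · subst hj; exact hc1
      · have hy' : y (j + 1) = S.bracket (y j) (x 1) :=
          (hyx1 j (by omega) (by omega)).symm
        rw [hy', S.leib10 (x 2) (y j) (hy1 j (by omega) (by omega)) (x 1) hx1m,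
          ih (by omega) (by omega), hx2x1]
        simp
  -- [x₁, y_j] = -y_{j+1}
  have haj : ∀ j, 1 ≤ j → j ≤ m - 1 → S.bracket (x 1) (y j) = - y (j + 1) := by
    intro j
    induction j with
    | zero => omega
    | succ j ih =>
      intro h1 h2
      by_cases hj : j = 0
      · subst hj; simpa using hx1y1
      · have hy' : y (j + 1) = S.bracket (y j) (x 1) :=
          (hyx1 j (by omega) (by omega)).symm
        rw [hy', S.leib10 (x 1) (y j) (hy1 j (by omega) (by omega)) (x 1) hx1m,
          ih (by omega) (by omega), hx1x1, hcj j (by omega) (by omega)]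
        have hneg : S.bracket (- y (j + 1)) (x 1) = - S.bracket (y (j + 1)) (x 1) := by
          simp
        rw [hneg, hyx1 (j + 1) (by omega) (by omega), sub_zero]
  -- final computation
  have hat : S.bracket (x 1) (y t) = - y (t + 1) := haj t ht1 (by omega)
  have hk1 : S.bracket (y t) (y t) = ((-1 : ℂ) ^ (t - 1) * β (2 * t - 1)) • x 2 := by
    have h := key (t - 1) t ht1 (by omega)
    have e1 : t - 1 + 1 = t := by omega
    have e2 : t + (t - 1) = 2 * t - 1 := by omega
    rw [e1, e2] at h; exact h
  have hk2 : S.bracket (y (t + 1)) (y t) = ((-1 : ℂ) ^ (t - 1) * β (2 * t)) • x 2 := by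
    have h := key (t - 1) (t + 1) (by omega) (by omega)
    have e1 : t - 1 + 1 = t := by omega
    have e2 : t + 1 + (t - 1) = 2 * t := by omega
    rw [e1, e2] at h; exact h
  have hl := S.leib11 (x 1) (y t) (hy1 t ht1 (by omega)) (y t) (hy1 t ht1 (by omega))
  rw [hk1, hat, map_smul, hx1x2, smul_zero] at hl
  have hneg : S.bracket (- y (t + 1)) (y t)
      = -(((-1 : ℂ) ^ (t - 1) * β (2 * t)) • x 2) := by
    rw [map_neg, LinearMap.neg_apply, hk2]
  rw [hneg] at hl
  have h0 : (((-1 : ℂ) ^ (t - 1) * β (2 * t)) + ((-1 : ℂ) ^ (t - 1) * β (2 * t))) • x 2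
      = 0 := by
    rw [add_smul]
    have h := hl.symm
    rw [← neg_add, neg_eq_zero] at h
    exact h
  rcases smul_eq_zero.mp h0 with h | h
  · have hp : ((-1 : ℂ) ^ (t - 1)) ≠ 0 := by
      apply pow_ne_zero; norm_num
    apply hb
    have h2 : ((-1 : ℂ) ^ (t - 1)) * β (2 * t) = 0 := by linear_combination h / 2
    exact (mul_eq_zero.mp h2).resolve_left hp
  · exact hx2ne h
end
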